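/- arXiv:gr-qc/0511087 — 4 statements merged into one kernel-verified Lean document; each statement's English description precedes it below -/
import Mathlib

section
/- For every φ ∈ 𝓑 the real-valued function i_φ(t) = M(u₀ + tφ) is twice continuously differentiable in t on ℝ (indeed, its third derivative exists for all t). -/
open Real MeasureTheory

noncomputable section

/-- Partial derivative with respect to ρ (the first coordinate) of an
axisymmetric function, viewed as a function of (ρ, z). -/
def pdR (f : ℝ × ℝ → ℝ) (p : ℝ × ℝ) : ℝ := fderiv ℝ f p (1, 0)

/-- Partial derivative with respect to z (the second coordinate). -/
def pdZ (f : ℝ × ℝ → ℝ) (p : ℝ × ℝ) : ℝ := fderiv ℝ f p (0, 1)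

/-- |∂f|² = f_{,ρ}² + f_{,z}². -/
def gradSq (f : ℝ × ℝ → ℝ) (p : ℝ × ℝ) : ℝ := (pdR f p) ^ 2 + (pdZ f p) ^ 2

/-- ∂f·∂g = f_{,ρ} g_{,ρ} + f_{,z} g_{,z}. -/
def gradDot (f g : ℝ × ℝ → ℝ) (p : ℝ × ℝ) : ℝ :=
  pdR f p * pdR g p + pdZ f p * pdZ g p

/-- The flat Laplacian of ℝ³ acting on axisymmetric functions:
Δf = f_{,ρρ} + ρ⁻¹ f_{,ρ} + f_{,zz}. -/
def lap (f : ℝ × ℝ → ℝ) (p : ℝ × ℝ) : ℝ :=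
  pdR (pdR f) p + (p.1)⁻¹ * pdR f p + pdZ (pdZ f) p

/-- The flat divergence of ℝ³ of an axisymmetric vector field (Wρ, Wz):
div W = ρ⁻¹ (ρ Wρ)_{,ρ} + Wz_{,z} = Wρ_{,ρ} + ρ⁻¹ Wρ + Wz_{,z}. -/
def divg (Wr Wz : ℝ × ℝ → ℝ) (p : ℝ × ℝ) : ℝ :=
  pdR Wr p + (p.1)⁻¹ * Wr p + pdZ Wz p

/-- The half-plane {ρ > 0} of (ρ, z), representing ℝ³ in cylindrical coordinates. -/
def HP : Set (ℝ × ℝ) := {p | 0 < p.1}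

/-- Ω_{ρ₀} = {ρ > ρ₀}, the exterior of the solid cylinder of radius ρ₀. -/
def Om (ρ₀ : ℝ) : Set (ℝ × ℝ) := {p | ρ₀ < p.1}

/-- ∫_{ℝ³} h dμ for an axisymmetric integrand h, where dμ = ρ dρ dz dφ. -/
def intR3 (h : ℝ × ℝ → ℝ) : ℝ := (2 * π) * ∫ p in HP, h p * p.1

/-- ∫_{Ω_{ρ₀}} h dμ for an axisymmetric integrand h. -/
def intOm (ρ₀ : ℝ) (h : ℝ × ℝ → ℝ) : ℝ := (2 * π) * ∫ p in Om ρ₀, h p * p.1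

/-- The mass functional M(v, Y) = (1/(32π)) ∫_{ℝ³} (|∂v|² + ρ⁻⁴ e^{−2v} |∂Y|²) dμ. -/
def MF (v Y : ℝ × ℝ → ℝ) : ℝ :=
  (1 / (32 * π)) *
    intR3 (fun p => gradSq v p + (p.1 ^ 4)⁻¹ * Real.exp (-2 * v p) * gradSq Y p)

/-- r = √(ρ² + z²). -/
def rr (p : ℝ × ℝ) : ℝ := Real.sqrt (p.1 ^ 2 + p.2 ^ 2)

/-- cos θ = z / r. -/
def cosT (p : ℝ × ℝ) : ℝ := p.2 / rr p

/-- sin²θ = ρ² / r². -/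
def sin2T (p : ℝ × ℝ) : ℝ := p.1 ^ 2 / (rr p) ^ 2

/-- r̃ = r + √|J|. -/
def rt (J : ℝ) (p : ℝ × ℝ) : ℝ := rr p + Real.sqrt |J|

/-- Σ = r̃² + |J| cos²θ. -/
def Sg (J : ℝ) (p : ℝ × ℝ) : ℝ := (rt J p) ^ 2 + |J| * (cosT p) ^ 2

/-- The extreme Kerr potential Y₀. -/
def Y0 (J : ℝ) (p : ℝ × ℝ) : ℝ :=
  2 * J * ((cosT p) ^ 3 - 3 * cosT p) - 2 * J ^ 2 * cosT p * (sin2T p) ^ 2 / Sg J p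

/-- The extreme Kerr Killing norm X₀. -/
def X0 (J : ℝ) (p : ℝ × ℝ) : ℝ :=
  (((rt J p) ^ 2 + |J|) ^ 2 - (rr p) ^ 2 * |J| * sin2T p) * sin2T p / Sg J p

/-- The extreme Kerr function v₀ = ln X₀ − 2 ln ρ, so that X₀ = ρ² e^{v₀}. -/
def v0 (J : ℝ) (p : ℝ × ℝ) : ℝ := Real.log (X0 J p) - 2 * Real.log p.1

/-- σ = √(r² + 1). -/
def sgm (p : ℝ × ℝ) : ℝ := Real.sqrt ((rr p) ^ 2 + 1)

/-- The pointwise weighted C¹ quantity σ^{−β}|f| + σ^{−β+1}|∂f|. -/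
def wFn (β : ℝ) (f : ℝ × ℝ → ℝ) (p : ℝ × ℝ) : ℝ :=
  sgm p ^ (-β) * |f p| + sgm p ^ (-β + 1) * Real.sqrt (gradSq f p)

/-- The weighted norm ‖f‖_{C¹_β(Ω)} = sup_Ω (σ^{−β}|f| + σ^{−β+1}|∂f|). -/
def C1norm (β : ℝ) (Ω : Set (ℝ × ℝ)) (f : ℝ × ℝ → ℝ) : ℝ :=
  sSup (wFn β f '' Ω)

/-- The Banach space 𝓑: pairs φ = (α, y) of axisymmetric C¹ functions with
y ≡ 0 on {ρ ≤ ρ₀} and finite norm ‖φ‖_𝓑 = ‖α‖_{C¹_β(ℝ³)} + ‖y‖_{C¹_β(Ω_{ρ₀})}. -/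
structure Bsp (ρ₀ β : ℝ) where
  a : ℝ × ℝ → ℝ
  y : ℝ × ℝ → ℝ
  ha : ContDiff ℝ 1 a
  hy : ContDiff ℝ 1 y
  hy0 : ∀ p : ℝ × ℝ, p.1 ≤ ρ₀ → y p = 0
  hba : BddAbove (wFn β a '' HP)
  hby : BddAbove (wFn β y '' Om ρ₀)

/-- The norm of 𝓑. -/
def Bnorm (ρ₀ β : ℝ) (φ : Bsp ρ₀ β) : ℝ :=
  C1norm β HP φ.a + C1norm β (Om ρ₀) φ.y

/-- i_φ(t) = M(u₀ + tφ) = M(v₀ + tα, Y₀ + ty). -/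
def iF (J ρ₀ β : ℝ) (φ : Bsp ρ₀ β) (t : ℝ) : ℝ :=
  MF (fun p => v0 J p + t * φ.a p) (fun p => Y0 J p + t * φ.y p)

/-- ‖α‖²_{H₁} = ∫_{ℝ³} |∂α|² dμ + ∫_{ℝ³} α² r⁻² dμ. -/
def H1sq (a : ℝ × ℝ → ℝ) : ℝ :=
  intR3 (fun p => gradSq a p) + intR3 (fun p => (a p) ^ 2 * ((rr p) ^ 2)⁻¹)

/-- ‖y‖²_{H₂} = ∫_{Ω_{ρ₀}} |∂y|² ρ⁻⁴ dμ + ∫_{Ω_{ρ₀}} y² ρ⁻⁶ dμ. -/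
def H2sq (ρ₀ : ℝ) (y : ℝ × ℝ → ℝ) : ℝ :=
  intOm ρ₀ (fun p => gradSq y p * (p.1 ^ 4)⁻¹) +
    intOm ρ₀ (fun p => (y p) ^ 2 * (p.1 ^ 6)⁻¹)

/-- ‖φ‖²_𝓗 = ‖α‖²_{H₁} + ‖y‖²_{H₂}. -/
def Hsq (ρ₀ β : ℝ) (φ : Bsp ρ₀ β) : ℝ := H1sq φ.a + H2sq ρ₀ φ.y

section Kerr

variable {J : ℝ} {p : ℝ × ℝ}

lemma DifferentiableAt.div2 {f g : ℝ × ℝ → ℝ} {p : ℝ × ℝ}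
    (hf : DifferentiableAt ℝ f p) (hg : DifferentiableAt ℝ g p) (h0 : g p ≠ 0) :
    DifferentiableAt ℝ (fun q => f q / g q) p := by
  simp only [div_eq_mul_inv]
  exact hf.mul (hg.inv h0)

lemma rr_sq (p : ℝ × ℝ) : rr p ^ 2 = p.1 ^ 2 + p.2 ^ 2 :=
  Real.sq_sqrt (by positivity)

lemma rr_pos (hp : 0 < p.1) : 0 < rr p :=
  Real.sqrt_pos.2 (by positivity)

lemma diff_rr (hp : 0 < p.1) : DifferentiableAt ℝ rr p := by
  have h : DifferentiableAt ℝ (fun q : ℝ × ℝ => q.1 ^ 2 + q.2 ^ 2) p := by fun_prop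
  exact h.sqrt (by positivity)

lemma sqrtJ_pos (hJ : J ≠ 0) : 0 < Real.sqrt |J| :=
  Real.sqrt_pos.2 (abs_pos.2 hJ)

lemma rt_pos (hJ : J ≠ 0) (hp : 0 < p.1) : 0 < rt J p :=
  add_pos (rr_pos hp) (sqrtJ_pos hJ)

lemma Sg_pos (hJ : J ≠ 0) (hp : 0 < p.1) : 0 < Sg J p := by
  have h1 := rt_pos hJ (p := p) hp
  have h2 : 0 < rt J p ^ 2 := by positivity
  have h3 : 0 ≤ |J| * cosT p ^ 2 := by positivity
  unfold Sg; linarith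

lemma diff_cosT (hp : 0 < p.1) : DifferentiableAt ℝ cosT p := by
  unfold cosT
  exact DifferentiableAt.div2 differentiableAt_snd (diff_rr hp) (rr_pos hp).ne'

lemma diff_sin2T (hp : 0 < p.1) : DifferentiableAt ℝ sin2T p := by
  have h := rr_pos hp
  unfold sin2T
  exact DifferentiableAt.div2 (differentiableAt_fst.pow 2) ((diff_rr hp).pow 2)
    (by positivity)

lemma diff_rt (hp : 0 < p.1) : DifferentiableAt ℝ (rt J) p :=
  (diff_rr hp).add_const _

lemma diff_Sg (hp : 0 < p.1) : DifferentiableAt ℝ (Sg J) p :=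
  ((diff_rt hp).pow 2).add (((diff_cosT hp).pow 2).const_mul _)

lemma diff_Y0 (hJ : J ≠ 0) (hp : 0 < p.1) : DifferentiableAt ℝ (Y0 J) p := by
  have hc := diff_cosT hp
  have hs := diff_sin2T hp
  have hS := diff_Sg (J := J) hp
  have hS0 := (Sg_pos hJ hp).ne'
  exact (((hc.pow 3).sub (hc.const_mul 3)).const_mul (2 * J)).sub
    (DifferentiableAt.div2 ((hc.const_mul (2 * J ^ 2)).mul (hs.pow 2)) hS hS0)

lemma diff_X0 (hJ : J ≠ 0) (hp : 0 < p.1) : DifferentiableAt ℝ (X0 J) p := by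
  have hr := diff_rr hp
  have ht := diff_rt (J := J) hp
  have hs := diff_sin2T hp
  have hS := diff_Sg (J := J) hp
  have hS0 := (Sg_pos hJ hp).ne'
  exact DifferentiableAt.div2 (((((ht.pow 2).add_const |J|).pow 2).sub
    (((hr.pow 2).mul_const |J|).mul hs)).mul hs) hS hS0

lemma sin2T_pos (hp : 0 < p.1) : 0 < sin2T p := by
  have := rr_pos hp
  unfold sin2T
  positivity

lemma sin2T_le_one (hp : 0 < p.1) : sin2T p ≤ 1 := by
  have h := rr_pos hp
  unfold sin2T
  rw [div_le_one (by positivity), rr_sq]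
  nlinarith [sq_nonneg p.2]

lemma sin2T_add_cosT_sq (hp : 0 < p.1) : sin2T p + cosT p ^ 2 = 1 := by
  have h := rr_pos hp
  unfold sin2T cosT
  rw [div_pow, ← add_div, rr_sq, div_eq_one_iff_eq (by positivity : p.1^2+p.2^2 ≠ 0)]

lemma X0_ge (hJ : J ≠ 0) (hp : 0 < p.1) : p.1 ^ 2 / 3 ≤ X0 J p := by
  have hrpos : 0 < rr p := rr_pos hp
  have ha0pos : 0 < Real.sqrt |J| := sqrtJ_pos hJ
  have hJa : |J| = Real.sqrt |J| ^ 2 := (Real.sq_sqrt (abs_nonneg J)).symm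
  have hspos : 0 < sin2T p := sin2T_pos hp
  have hsle : sin2T p ≤ 1 := sin2T_le_one hp
  have hcs : cosT p ^ 2 = 1 - sin2T p := by
    have := sin2T_add_cosT_sq hp; linarith
  have hrho : p.1 ^ 2 = sin2T p * rr p ^ 2 := by
    unfold sin2T; field_simp
  have hSgpos : 0 < Sg J p := Sg_pos hJ hp
  unfold Sg rt at hSgpos
  unfold X0 Sg rt
  rw [div_le_div_iff₀ (by norm_num) hSgpos]
  set r := rr p with hrdef
  set s := sin2T p with hsdef
  set a0 := Real.sqrt |J| with ha0def
  rw [hJa, hcs, hrho]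
  have h1 : (r + a0) ^ 2 + a0 ^ 2 * (1 - s) ≤ 2 * r ^ 2 + 3 * a0 ^ 2 := by
    nlinarith [sq_nonneg (r - a0), mul_nonneg (mul_nonneg ha0pos.le ha0pos.le) hspos.le]
  have h2 : r ^ 4 + r ^ 2 * a0 ^ 2 + a0 ^ 4 ≤ ((r + a0) ^ 2 + a0 ^ 2) ^ 2 - r ^ 2 * a0 ^ 2 * s := by
    nlinarith [mul_pos hrpos ha0pos, mul_pos (mul_pos hrpos hrpos) (mul_pos ha0pos ha0pos),
      mul_le_one₀ hsle (mul_pos (mul_pos hrpos hrpos) (mul_pos ha0pos ha0pos)).le,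
      mul_nonneg (mul_nonneg hrpos.le ha0pos.le) (mul_nonneg hrpos.le ha0pos.le),
      sq_nonneg (r*a0), mul_pos hrpos ha0pos,
      mul_le_of_le_one_right (mul_pos (mul_pos hrpos hrpos) (mul_pos ha0pos ha0pos)).le hsle]
  calc s * r ^ 2 * ((r + a0) ^ 2 + a0 ^ 2 * (1 - s))
      ≤ s * r ^ 2 * (2 * r ^ 2 + 3 * a0 ^ 2) := by
        apply mul_le_mul_of_nonneg_left h1; positivity
    _ ≤ s * (3 * (r ^ 4 + r ^ 2 * a0 ^ 2 + a0 ^ 4)) := by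
        nlinarith [mul_nonneg hspos.le (by positivity : (0:ℝ) ≤ r ^ 4 + 3 * a0 ^ 4)]
    _ ≤ s * (3 * (((r + a0) ^ 2 + a0 ^ 2) ^ 2 - r ^ 2 * a0 ^ 2 * s)) := by
        nlinarith [mul_nonneg hspos.le (sub_nonneg.2 h2)]
    _ = (((r + a0) ^ 2 + a0 ^ 2) ^ 2 - r ^ 2 * a0 ^ 2 * s) * s * 3 := by ring

lemma X0_pos (hJ : J ≠ 0) (hp : 0 < p.1) : 0 < X0 J p :=
  lt_of_lt_of_le (by positivity) (X0_ge hJ hp)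

lemma diff_v0 (hJ : J ≠ 0) (hp : 0 < p.1) : DifferentiableAt ℝ (v0 J) p := by
  have h1 : DifferentiableAt ℝ (fun q => Real.log (X0 J q)) p :=
    (diff_X0 hJ hp).log (X0_pos hJ hp).ne'
  have h2 : DifferentiableAt ℝ (fun q : ℝ × ℝ => Real.log q.1) p :=
    DifferentiableAt.log differentiableAt_fst hp.ne'
  exact h1.sub (h2.const_mul 2)

lemma exp_neg_two_v0 (hJ : J ≠ 0) (hp : 0 < p.1) :
    (p.1 ^ 4)⁻¹ * Real.exp (-2 * v0 J p) = (X0 J p ^ 2)⁻¹ := by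
  have hX := X0_pos hJ (p := p) hp
  have h : -2 * v0 J p = (Real.log p.1 + Real.log p.1 + Real.log p.1 + Real.log p.1)
      - (Real.log (X0 J p) + Real.log (X0 J p)) := by unfold v0; ring
  rw [h]
  simp only [Real.exp_sub, Real.exp_add, Real.exp_log hp, Real.exp_log hX]
  field_simp

end Kerr
section Grad

/-- Linearity of the partial derivative. -/
lemma fderiv_add_smul {f g : ℝ × ℝ → ℝ} {p : ℝ × ℝ} (t : ℝ)
    (hf : DifferentiableAt ℝ f p) (hg : DifferentiableAt ℝ g p) (v : ℝ × ℝ) :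
    fderiv ℝ (fun q => f q + t * g q) p v = fderiv ℝ f p v + t * fderiv ℝ g p v := by
  have h : HasFDerivAt (fun q => f q + t * g q)
      (fderiv ℝ f p + t • fderiv ℝ g p) p := by
    have := hf.hasFDerivAt.add ((hg.hasFDerivAt).const_smul t)
    exact this
  rw [h.fderiv]
  simp

lemma gradSq_expand {f g : ℝ × ℝ → ℝ} {p : ℝ × ℝ} (t : ℝ)
    (hf : DifferentiableAt ℝ f p) (hg : DifferentiableAt ℝ g p) :
    gradSq (fun q => f q + t * g q) p
      = gradSq f p + 2 * t * gradDot f g p + t ^ 2 * gradSq g p := by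
  unfold gradSq gradDot pdR pdZ
  rw [fderiv_add_smul t hf hg, fderiv_add_smul t hf hg]
  ring

lemma gradSq_nonneg (f : ℝ × ℝ → ℝ) (p : ℝ × ℝ) : 0 ≤ gradSq f p := by
  unfold gradSq; positivity

lemma abs_gradDot_le (f g : ℝ × ℝ → ℝ) (p : ℝ × ℝ) :
    |gradDot f g p| ≤ (gradSq f p + gradSq g p) / 2 := by
  unfold gradDot gradSq
  rw [abs_le]
  constructor <;> nlinarith [sq_nonneg (pdR f p + pdR g p), sq_nonneg (pdZ f p + pdZ g p),
    sq_nonneg (pdR f p - pdR g p), sq_nonneg (pdZ f p - pdZ g p)]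

/-- If `f = f₂ + (-t)·g` pointwise, bound `gradSq f` by those of `f₂` and `g`. -/
lemma gradSq_le_of_sub {f g : ℝ × ℝ → ℝ} {p : ℝ × ℝ} (t : ℝ)
    (hf : DifferentiableAt ℝ f p) (hg : DifferentiableAt ℝ g p) :
    gradSq f p ≤ 2 * gradSq (fun q => f q + t * g q) p + 2 * t ^ 2 * gradSq g p := by
  have h1 : ∀ v, fderiv ℝ f p v = fderiv ℝ (fun q => f q + t * g q) p v - t * fderiv ℝ g p v := by
    intro v; rw [fderiv_add_smul t hf hg]; ring
  unfold gradSq pdR pdZ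
  rw [h1 (1,0), h1 (0,1)]
  nlinarith [sq_nonneg (fderiv ℝ (fun q => f q + t * g q) p (1,0) + t * fderiv ℝ g p (1,0)),
    sq_nonneg (fderiv ℝ (fun q => f q + t * g q) p (0,1) + t * fderiv ℝ g p (0,1))]

/-- Measurability of partial derivatives and gradients. -/
lemma measurable_pd (f : ℝ × ℝ → ℝ) (v : ℝ × ℝ) :
    Measurable (fun p => fderiv ℝ f p v) :=
  measurable_fderiv_apply_const ℝ f v

lemma measurable_gradSq (f : ℝ × ℝ → ℝ) : Measurable (gradSq f) :=
  ((measurable_pd f (1,0)).pow_const 2).add ((measurable_pd f (0,1)).pow_const 2)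

end Grad

section Sgm

lemma sgm_ge_one (p : ℝ × ℝ) : 1 ≤ sgm p := by
  unfold sgm
  nth_rw 1 [show (1:ℝ) = Real.sqrt 1 by simp]
  exact Real.sqrt_le_sqrt (by nlinarith [sq_nonneg (rr p)])

lemma sgm_pos (p : ℝ × ℝ) : 0 < sgm p := lt_of_lt_of_le one_pos (sgm_ge_one p)

lemma continuous_sgm : Continuous sgm := by
  unfold sgm rr
  fun_prop

lemma sgm_ge_half (p : ℝ × ℝ) : (1 + ‖p‖) / 2 ≤ sgm p := by
  have h1 : ‖p‖ ≤ rr p := by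
    have h2 : ‖p‖ = max |p.1| |p.2| := rfl
    rw [h2]
    have a1 : |p.1| ≤ rr p := by
      rw [← Real.sqrt_sq_eq_abs]
      exact Real.sqrt_le_sqrt (by nlinarith [sq_nonneg p.2])
    have a2 : |p.2| ≤ rr p := by
      rw [← Real.sqrt_sq_eq_abs]
      exact Real.sqrt_le_sqrt (by nlinarith [sq_nonneg p.1])
    exact max_le a1 a2
  have h3 : rr p ≤ sgm p := by
    unfold sgm
    nth_rw 1 [← Real.sqrt_sq (show 0 ≤ rr p from Real.sqrt_nonneg _)]
    exact Real.sqrt_le_sqrt (by nlinarith)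
  have h4 := sgm_ge_one p
  linarith

lemma continuous_sgm_rpow (c : ℝ) : Continuous fun p : ℝ × ℝ => sgm p ^ c := by
  rw [continuous_iff_continuousAt]
  intro p
  exact (Real.continuousAt_rpow_const (sgm p) c (Or.inl (sgm_pos p).ne')).comp
    continuous_sgm.continuousAt

/-- The master integrable majorant. -/
lemma integrable_maj {β : ℝ} (hβ : β < -(1/2)) :
    Integrable (fun p : ℝ × ℝ => sgm p ^ (2*β-1)) := by
  have hexp : (Module.finrank ℝ (ℝ × ℝ) : ℝ) < 1 - 2*β := by
    have : Module.finrank ℝ (ℝ × ℝ) = 2 := by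
      simp [Module.finrank_prod]
    rw [this]; push_cast; linarith
  have hbase : Integrable (fun p : ℝ × ℝ => (1 + ‖p‖) ^ (-(1 - 2*β))) :=
    integrable_one_add_norm hexp
  have hmeas : AEStronglyMeasurable (fun p : ℝ × ℝ => sgm p ^ (2*β-1)) volume :=
    (continuous_sgm_rpow _).aestronglyMeasurable
  refine (hbase.const_mul ((2:ℝ) ^ (1-2*β))).mono' hmeas ?_
  filter_upwards with p
  have h1 : (0:ℝ) < (1 + ‖p‖) / 2 := by positivity
  have h2 : sgm p ^ (2*β-1) ≤ ((1 + ‖p‖)/2) ^ (2*β-1) :=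
    Real.rpow_le_rpow_of_nonpos h1 (sgm_ge_half p) (by linarith)
  rw [Real.norm_of_nonneg (Real.rpow_nonneg (sgm_pos p).le _)]
  refine h2.trans (le_of_eq ?_)
  rw [Real.div_rpow (by positivity) (by norm_num), div_eq_mul_inv,
    ← Real.rpow_neg (by norm_num : (0:ℝ) ≤ 2), show -(2*β-1) = 1-2*β by ring,
    show -(1-2*β) = 2*β-1 by ring, mul_comm]
end Sgm

section Bounds

lemma abs_le_of_wFn {β K : ℝ} {f : ℝ × ℝ → ℝ} {p : ℝ × ℝ} (hβ : β ≤ 0)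
    (h : wFn β f p ≤ K) : |f p| ≤ K := by
  have h1 : 1 ≤ sgm p ^ (-β) := Real.one_le_rpow (sgm_ge_one p) (by linarith)
  have h2 : 0 ≤ sgm p ^ (-β + 1) * Real.sqrt (gradSq f p) := by
    have := Real.rpow_nonneg (sgm_pos p).le (-β + 1)
    have := Real.sqrt_nonneg (gradSq f p)
    positivity
  calc |f p| ≤ sgm p ^ (-β) * |f p| := le_mul_of_one_le_left (abs_nonneg _) h1
    _ ≤ wFn β f p := by unfold wFn; linarith
    _ ≤ K := h

lemma gradSq_le_of_wFn {β K : ℝ} {f : ℝ × ℝ → ℝ} {p : ℝ × ℝ}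
    (h : wFn β f p ≤ K) : gradSq f p ≤ K ^ 2 * sgm p ^ (2*β - 2) := by
  have hpos : 0 < sgm p ^ (-β + 1) := Real.rpow_pos_of_pos (sgm_pos p) _
  have h2 : sgm p ^ (-β + 1) * Real.sqrt (gradSq f p) ≤ K := by
    have h0 : 0 ≤ sgm p ^ (-β) * |f p| := by
      have := Real.rpow_nonneg (sgm_pos p).le (-β)
      positivity
    unfold wFn at h; linarith
  have h3 : Real.sqrt (gradSq f p) ≤ K * sgm p ^ (β - 1) := by
    have hmul : sgm p ^ (β - 1) * sgm p ^ (-β + 1) = 1 := by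
      rw [← Real.rpow_add (sgm_pos p)]
      norm_num
    calc Real.sqrt (gradSq f p)
        = sgm p ^ (β - 1) * (sgm p ^ (-β + 1) * Real.sqrt (gradSq f p)) := by
          rw [← mul_assoc, hmul, one_mul]
      _ ≤ sgm p ^ (β - 1) * K :=
          mul_le_mul_of_nonneg_left h2 (Real.rpow_nonneg (sgm_pos p).le _)
      _ = K * sgm p ^ (β - 1) := mul_comm _ _
  have h4 : gradSq f p = Real.sqrt (gradSq f p) ^ 2 :=
    (Real.sq_sqrt (gradSq_nonneg f p)).symm
  rw [h4]
  calc Real.sqrt (gradSq f p) ^ 2 ≤ (K * sgm p ^ (β - 1)) ^ 2 := by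
        have := Real.sqrt_nonneg (gradSq f p)
        nlinarith
    _ = K ^ 2 * sgm p ^ (2*β - 2) := by
        rw [mul_pow, ← Real.rpow_natCast (sgm p ^ (β - 1)) 2,
          ← Real.rpow_mul (sgm_pos p).le,
          show (β - 1) * ((2:ℕ):ℝ) = 2*β - 2 by push_cast; ring]

lemma gradSq_zero_of_locally_zero {ρ₀ : ℝ} {y : ℝ × ℝ → ℝ} {p : ℝ × ℝ}
    (hy0 : ∀ q : ℝ × ℝ, q.1 ≤ ρ₀ → y q = 0) (hp : p.1 < ρ₀) : gradSq y p = 0 := by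
  have hopen : IsOpen {q : ℝ × ℝ | q.1 < ρ₀} := isOpen_lt continuous_fst continuous_const
  have hev : y =ᶠ[nhds p] fun _ => (0:ℝ) := by
    filter_upwards [hopen.mem_nhds hp] with q hq using hy0 q (le_of_lt hq)
  have hfd : fderiv ℝ y p = 0 := by
    rw [hev.fderiv_eq, fderiv_fun_const]
    rfl
  unfold gradSq pdR pdZ
  rw [hfd]
  simp

end Bounds

section Meas

lemma measurable_rr : Measurable rr := by
  unfold rr; fun_prop

lemma measurable_cosT : Measurable cosT :=
  measurable_snd.div measurable_rr

lemma measurable_sin2T : Measurable sin2T :=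
  (measurable_fst.pow_const 2).div (measurable_rr.pow_const 2)

lemma measurable_Sg (J : ℝ) : Measurable (Sg J) :=
  ((measurable_rr.add_const _).pow_const 2).add
    ((measurable_cosT.pow_const 2).const_mul _)

lemma measurable_Y0 (J : ℝ) : Measurable (Y0 J) :=
  (((measurable_cosT.pow_const 3).sub (measurable_cosT.const_mul 3)).const_mul (2*J)).sub
    ((((measurable_cosT.const_mul (2*J^2)).mul (measurable_sin2T.pow_const 2))).div
      (measurable_Sg J))

lemma measurable_X0 (J : ℝ) : Measurable (X0 J) := by
  unfold X0 rt
  exact ((((((measurable_rr.add_const _).pow_const 2).add_const |J|).pow_const 2).sub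
    (((measurable_rr.pow_const 2).mul_const |J|).mul measurable_sin2T)).mul
    measurable_sin2T).div (by exact measurable_Sg J)

lemma measurable_v0 (J : ℝ) : Measurable (v0 J) :=
  (Real.measurable_log.comp (measurable_X0 J)).sub
    ((Real.measurable_log.comp measurable_fst).const_mul 2)

end Meas

section Param

lemma mul3_le {x1 y1 x2 y2 x3 : ℝ} (e1 : x1 ≤ y1) (e2 : x2 ≤ y2)
    (h2 : 0 ≤ x2) (h3 : 0 ≤ x3) (hy1 : 0 ≤ y1) : x1 * x2 * x3 ≤ y1 * y2 * x3 :=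
  mul_le_mul_of_nonneg_right (mul_le_mul e1 e2 h2 hy1) h3

/-- Integrability of the exponential families. -/
lemma gg_integrable {μ : Measure (ℝ × ℝ)} {a H : ℝ × ℝ → ℝ} {M : ℝ} (hM : 0 ≤ M)
    (ha : Measurable a) (haM : ∀ᵐ p ∂μ, |a p| ≤ M)
    (hH : Integrable H μ) (n : ℕ) (t₀ : ℝ) :
    Integrable (fun p => (a p) ^ n * Real.exp (-2 * t₀ * a p) * H p) μ := by
  have hmeasF : AEStronglyMeasurable
      (fun p => (a p) ^ n * Real.exp (-2 * t₀ * a p) * H p) μ :=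
    (((ha.pow_const n).mul
      (Real.measurable_exp.comp (ha.const_mul (-2*t₀)))).aestronglyMeasurable.mul
        hH.aestronglyMeasurable)
  refine (hH.abs.const_mul (M ^ n * Real.exp (2 * |t₀| * M))).mono' hmeasF ?_
  filter_upwards [haM] with p hp
  have e1 : |a p| ^ n ≤ M ^ n := pow_le_pow_left₀ (abs_nonneg _) hp n
  have e2 : Real.exp (-2 * t₀ * a p) ≤ Real.exp (2 * |t₀| * M) := by
    apply Real.exp_le_exp.2
    calc -2 * t₀ * a p ≤ |(-2) * t₀ * a p| := le_abs_self _
      _ = 2 * |t₀| * |a p| := by rw [abs_mul, abs_mul]; simp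
      _ ≤ 2 * |t₀| * M := by
          have := abs_nonneg t₀; nlinarith [abs_nonneg (a p)]
  rw [norm_mul, norm_mul, Real.norm_eq_abs, Real.norm_eq_abs, Real.norm_eq_abs,
    abs_pow, abs_of_nonneg (Real.exp_nonneg _)]
  exact mul3_le e1 e2 (Real.exp_nonneg _) (abs_nonneg _) (pow_nonneg hM n)

open Metric in
/-- Differentiation under the integral sign for the exponential families appearing in the
mass functional. -/
lemma gg_hasDerivAt {μ : Measure (ℝ × ℝ)} {a H : ℝ × ℝ → ℝ} {M : ℝ} (hM : 0 ≤ M)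
    (ha : Measurable a) (haM : ∀ᵐ p ∂μ, |a p| ≤ M)
    (hH : Integrable H μ) (n : ℕ) (t₀ : ℝ) :
    HasDerivAt (fun t => ∫ p, (a p) ^ n * Real.exp (-2 * t * a p) * H p ∂μ)
      (-2 * ∫ p, (a p) ^ (n + 1) * Real.exp (-2 * t₀ * a p) * H p ∂μ) t₀ := by
  have hmeasF : ∀ t : ℝ, AEStronglyMeasurable
      (fun p => (a p) ^ n * Real.exp (-2 * t * a p) * H p) μ := by
    intro t
    exact (((ha.pow_const n).mul
      (Real.measurable_exp.comp (ha.const_mul (-2*t)))).aestronglyMeasurable.mul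
        hH.aestronglyMeasurable)
  have hmeasF' : AEStronglyMeasurable
      (fun p => -2 * ((a p) ^ (n+1) * Real.exp (-2 * t₀ * a p) * H p)) μ := by
    exact ((((ha.pow_const (n+1)).mul
      (Real.measurable_exp.comp (ha.const_mul (-2*t₀)))).aestronglyMeasurable.mul
        hH.aestronglyMeasurable).const_mul (-2))
  have hint : Integrable (fun p => (a p) ^ n * Real.exp (-2 * t₀ * a p) * H p) μ :=
    gg_integrable hM ha haM hH n t₀
  have key := hasDerivAt_integral_of_dominated_loc_of_deriv_le (μ := μ)
    (F := fun t p => (a p) ^ n * Real.exp (-2 * t * a p) * H p)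
    (F' := fun t p => -2 * ((a p) ^ (n+1) * Real.exp (-2 * t * a p) * H p))
    (bound := fun p => 2 * M ^ (n+1) * Real.exp (2 * (|t₀|+1) * M) * |H p|)
    (x₀ := t₀) (Metric.ball_mem_nhds t₀ one_pos)
    (Filter.Eventually.of_forall fun t => hmeasF t) hint hmeasF' ?_ ?_ ?_
  · rcases key with ⟨-, hkey⟩
    have : ∫ p, -2 * ((a p) ^ (n+1) * Real.exp (-2 * t₀ * a p) * H p) ∂μ
        = -2 * ∫ p, (a p) ^ (n+1) * Real.exp (-2 * t₀ * a p) * H p ∂μ :=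
      by simpa [smul_eq_mul] using
        integral_smul (μ := μ) (-2:ℝ) (fun p => a p ^ (n+1) * Real.exp (-2*t₀*a p) * H p)
    rwa [this] at hkey
  · -- bound on the derivative
    filter_upwards [haM] with p hp t ht
    have htabs : |t| ≤ |t₀| + 1 := by
      have := mem_ball_iff_norm.1 ht
      have h2 : |t - t₀| < 1 := this
      calc |t| = |t - t₀ + t₀| := by ring_nf
        _ ≤ |t - t₀| + |t₀| := abs_add_le _ _
        _ ≤ |t₀| + 1 := by linarith
    have e1 : |a p| ^ (n+1) ≤ M ^ (n+1) := pow_le_pow_left₀ (abs_nonneg _) hp (n+1)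
    have e2 : Real.exp (-2 * t * a p) ≤ Real.exp (2 * (|t₀|+1) * M) := by
      apply Real.exp_le_exp.2
      calc -2 * t * a p ≤ |(-2) * t * a p| := le_abs_self _
        _ = 2 * |t| * |a p| := by rw [abs_mul, abs_mul]; simp
        _ ≤ 2 * (|t₀|+1) * M := by
            have h0 := abs_nonneg t
            have h1 := abs_nonneg (a p)
            have h2 := abs_nonneg t₀
            nlinarith
    have hb : |a p ^ (n+1) * Real.exp (-2 * t * a p) * H p|
        ≤ M ^ (n+1) * Real.exp (2 * (|t₀|+1) * M) * |H p| := by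
      rw [abs_mul, abs_mul, abs_pow, abs_of_nonneg (Real.exp_nonneg _)]
      exact mul3_le e1 e2 (Real.exp_nonneg _) (abs_nonneg _) (pow_nonneg hM _)
    calc ‖-2 * (a p ^ (n+1) * Real.exp (-2 * t * a p) * H p)‖
        = 2 * |a p ^ (n+1) * Real.exp (-2 * t * a p) * H p| := by
          rw [Real.norm_eq_abs, abs_mul]; norm_num
      _ ≤ 2 * (M ^ (n+1) * Real.exp (2 * (|t₀|+1) * M) * |H p|) := by linarith
      _ = 2 * M ^ (n+1) * Real.exp (2 * (|t₀|+1) * M) * |H p| := by ring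
  · -- the bound is integrable
    exact (hH.abs.const_mul (2 * M ^ (n+1) * Real.exp (2 * (|t₀|+1) * M))).congr
      (by filter_upwards with p; ring_nf)
  · -- differentiability in t
    filter_upwards with p t _
    have hd : HasDerivAt (fun s : ℝ => -2 * s * a p) (-2 * a p) t := by
      have h := (hasDerivAt_id t).const_mul (-2 * a p)
      have heq : (fun s : ℝ => -2 * a p * id s) = fun s : ℝ => -2 * s * a p := by
        funext s; simp [id]; ring
      rw [← heq]
      simpa using h
    have hexp := hd.exp
    have hmul := (hexp.const_mul ((a p) ^ n)).mul_const (H p)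
    convert hmul using 1
    · rfl
    · ring
  
end Param

section Chain

lemma contDiff_of_deriv_chain (g : ℕ → ℝ → ℝ)
    (h : ∀ n t, HasDerivAt (g n) (-2 * g (n+1) t) t) (m : ℕ) :
    ∀ n : ℕ, ContDiff ℝ m (g n) := by
  induction m with
  | zero =>
      intro n
      rw [show ((0:ℕ) : WithTop ℕ∞) = 0 by rfl, contDiff_zero]
      exact Differentiable.continuous (fun t => (h n t).differentiableAt)
  | succ k ih =>
      intro n
      have hcast : ((k+1 : ℕ) : WithTop ℕ∞) = (k : WithTop ℕ∞) + 1 := by push_cast; rfl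
      rw [hcast, contDiff_succ_iff_deriv]
      have hdiff : Differentiable ℝ (g n) := fun t => (h n t).differentiableAt
      have hd2 : ContDiff ℝ (k : WithTop ℕ∞) (deriv (g n)) := by
        have hderiv : deriv (g n) = fun t => (-2 : ℝ) * g (n+1) t :=
          funext fun t => (h n t).deriv
        rw [hderiv]
        exact contDiff_const.mul (ih (n+1))
      exact ⟨hdiff, by simp, hd2⟩

end Chain

section MoreHelpers

lemma abs_fst_le_rr (p : ℝ × ℝ) : |p.1| ≤ rr p := by
  rw [← Real.sqrt_sq_eq_abs]
  exact Real.sqrt_le_sqrt (by nlinarith [sq_nonneg p.2])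

lemma rr_le_sgm (p : ℝ × ℝ) : rr p ≤ sgm p := by
  unfold sgm
  nth_rw 1 [← Real.sqrt_sq (show 0 ≤ rr p from Real.sqrt_nonneg _)]
  exact Real.sqrt_le_sqrt (by nlinarith)

lemma fst_le_sgm (p : ℝ × ℝ) : p.1 ≤ sgm p :=
  le_trans (le_abs_self _) (le_trans (abs_fst_le_rr p) (rr_le_sgm p))

lemma measurable_gradDot (f g : ℝ × ℝ → ℝ) : Measurable (gradDot f g) :=
  ((measurable_pd f (1,0)).mul (measurable_pd g (1,0))).add
    ((measurable_pd f (0,1)).mul (measurable_pd g (0,1)))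

lemma sgm_rpow_mul_fst_le {c : ℝ} (p : ℝ × ℝ) (hp : 0 < p.1) :
    sgm p ^ c * p.1 ≤ sgm p ^ (c + 1) := by
  calc sgm p ^ c * p.1 ≤ sgm p ^ c * sgm p :=
        mul_le_mul_of_nonneg_left (fst_le_sgm p) (Real.rpow_nonneg (sgm_pos p).le _)
    _ = sgm p ^ (c + 1) := (Real.rpow_add_one (sgm_pos p).ne' c).symm

lemma line_null (c : ℝ) : (volume : Measure (ℝ × ℝ)) {p : ℝ × ℝ | p.1 = c} = 0 := by
  have h : {p : ℝ × ℝ | p.1 = c} = ({c} : Set ℝ) ×ˢ (Set.univ : Set ℝ) := by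
    ext p
    simp only [Set.mem_setOf_eq, Set.mem_prod, Set.mem_singleton_iff, Set.mem_univ, and_true]
  rw [h, Measure.volume_eq_prod, Measure.prod_prod]
  simp

lemma ae_ne_line {c : ℝ} (μ : Measure (ℝ × ℝ)) (hμ : μ ≤ volume) :
    ∀ᵐ p ∂μ, p.1 ≠ c := by
  rw [ae_iff]
  have h1 : {p : ℝ × ℝ | ¬ p.1 ≠ c} = {p : ℝ × ℝ | p.1 = c} := by ext p; simp
  rw [h1]
  exact le_antisymm (le_trans (hμ _) (le_of_eq (line_null c))) zero_le

end MoreHelpers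

/-- For every φ ∈ 𝓑 the function i_φ(t) = M(u₀ + tφ) is twice continuously
differentiable in t on ℝ; indeed, its third derivative exists for all t. -/
theorem iF_isC2 (J ρ₀ β : ℝ) (hJ : J ≠ 0) (hρ₀ : 0 < ρ₀) (hβ : β < -(1 / 2))
    (φ : Bsp ρ₀ β) :
    ContDiff ℝ 2 (iF J ρ₀ β φ) ∧
      ∀ t : ℝ, DifferentiableAt ℝ (iteratedDeriv 2 (iF J ρ₀ β φ)) t := by
  suffices hC3 : ContDiff ℝ 3 (iF J ρ₀ β φ) by
    refine ⟨hC3.of_le (by norm_num), fun t => ?_⟩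
    exact (hC3.differentiable_iteratedDeriv 2 (by norm_num)) t
  obtain ⟨Ka, hKa⟩ := φ.hba
  obtain ⟨Ky, hKy⟩ := φ.hby
  have hβ0 : β ≤ 0 := by linarith
  set a := φ.a with hadef
  set yv := φ.y with hydef
  have hKaB : ∀ p ∈ HP, wFn β a p ≤ Ka := fun p hp => hKa ⟨p, hp, rfl⟩
  have hKyB : ∀ p ∈ Om ρ₀, wFn β yv p ≤ Ky := fun p hp => hKy ⟨p, hp, rfl⟩
  have hKa0 : 0 ≤ Ka :=
    le_trans (by unfold wFn sgm; positivity) (hKaB (1,0) (by norm_num [HP]))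
  have hKy0 : 0 ≤ Ky :=
    le_trans (by unfold wFn sgm; positivity)
      (hKyB (ρ₀+1,0) (by simp only [Om, Set.mem_setOf_eq]; linarith))
  have hadiff : Differentiable ℝ a := φ.ha.differentiable one_ne_zero
  have hydiff : Differentiable ℝ yv := φ.hy.differentiable one_ne_zero
  have hameas : Measurable a := φ.ha.continuous.measurable
  have hHPmeas : MeasurableSet HP :=
    (isOpen_lt continuous_const continuous_fst).measurableSet
  set μ := volume.restrict HP with hμdef
  have haeHP : ∀ᵐ p ∂μ, p ∈ HP := ae_restrict_mem hHPmeas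
  have habs : ∀ᵐ p ∂μ, |a p| ≤ Ka :=
    haeHP.mono fun p hp => abs_le_of_wFn hβ0 (hKaB p hp)
  -- the six pieces of the integrand
  set Arho := fun p : ℝ × ℝ => gradSq (v0 J) p * p.1 with hAdef
  set Brho := fun p : ℝ × ℝ => gradDot (v0 J) a p * p.1 with hBdef
  set Crho := fun p : ℝ × ℝ => gradSq a p * p.1 with hCdef
  set Drho := fun p : ℝ × ℝ =>
    (p.1 ^ 4)⁻¹ * Real.exp (-2 * v0 J p) * gradSq (Y0 J) p * p.1 with hDdef
  set Erho := fun p : ℝ × ℝ =>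
    (p.1 ^ 4)⁻¹ * Real.exp (-2 * v0 J p) * gradDot (Y0 J) yv p * p.1 with hEdef
  set Grho := fun p : ℝ × ℝ =>
    (p.1 ^ 4)⁻¹ * Real.exp (-2 * v0 J p) * gradSq yv p * p.1 with hGdef
  -- measurability
  have mW : Measurable fun p : ℝ × ℝ => (p.1 ^ 4)⁻¹ * Real.exp (-2 * v0 J p) :=
    ((measurable_fst.pow_const 4).inv).mul
      (Real.measurable_exp.comp ((measurable_v0 J).const_mul (-2)))
  have mA : AEStronglyMeasurable Arho μ :=
    ((measurable_gradSq (v0 J)).mul measurable_fst).aestronglyMeasurable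
  have mB : AEStronglyMeasurable Brho μ :=
    ((measurable_gradDot (v0 J) a).mul measurable_fst).aestronglyMeasurable
  have mC : AEStronglyMeasurable Crho μ :=
    ((measurable_gradSq a).mul measurable_fst).aestronglyMeasurable
  have mD : AEStronglyMeasurable Drho μ :=
    (((mW.mul (measurable_gradSq (Y0 J)))).mul measurable_fst).aestronglyMeasurable
  have mE : AEStronglyMeasurable Erho μ :=
    (((mW.mul (measurable_gradDot (Y0 J) yv))).mul measurable_fst).aestronglyMeasurable
  have mG : AEStronglyMeasurable Grho μ :=
    (((mW.mul (measurable_gradSq yv))).mul measurable_fst).aestronglyMeasurable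
  -- pointwise nonnegativity
  have hW_nonneg : ∀ p : ℝ × ℝ, 0 ≤ (p.1 ^ 4)⁻¹ * Real.exp (-2 * v0 J p) := by
    intro p; positivity
  have hA_nn : ∀ᵐ p ∂μ, 0 ≤ Arho p := haeHP.mono fun p hp => by
    have : (0:ℝ) < p.1 := hp
    exact mul_nonneg (gradSq_nonneg _ _) this.le
  have hD_nn : ∀ᵐ p ∂μ, 0 ≤ Drho p := haeHP.mono fun p hp => by
    have : (0:ℝ) < p.1 := hp
    exact mul_nonneg (mul_nonneg (hW_nonneg p) (gradSq_nonneg _ _)) this.le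
  -- the master majorant
  have hsgm_int : Integrable (fun p : ℝ × ℝ => sgm p ^ (2*β-1)) μ :=
    (integrable_maj hβ).restrict
  -- `Crho` is always integrable
  have hC : Integrable Crho μ := by
    refine (hsgm_int.const_mul (Ka ^ 2)).mono' mC ?_
    filter_upwards [haeHP] with p hp
    have hp1 : (0:ℝ) < p.1 := hp
    have h1 : gradSq a p ≤ Ka ^ 2 * sgm p ^ (2*β-2) := gradSq_le_of_wFn (hKaB p hp)
    have h3 : sgm p ^ (2*β-2) * p.1 ≤ sgm p ^ (2*β-1) := by
      have := sgm_rpow_mul_fst_le (c := 2*β-2) p hp1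
      rwa [show 2*β-2+1 = 2*β-1 by ring] at this
    rw [Real.norm_of_nonneg (mul_nonneg (gradSq_nonneg a p) hp1.le)]
    calc gradSq a p * p.1 ≤ (Ka ^ 2 * sgm p ^ (2*β-2)) * p.1 :=
          mul_le_mul_of_nonneg_right h1 hp1.le
      _ = Ka ^ 2 * (sgm p ^ (2*β-2) * p.1) := by ring
      _ ≤ Ka ^ 2 * sgm p ^ (2*β-1) := by
          exact mul_le_mul_of_nonneg_left h3 (by positivity)
  -- `Grho` is always integrable
  have hG : Integrable Grho μ := by
    refine (hsgm_int.const_mul (9 * Ky ^ 2 / ρ₀ ^ 3)).mono' mG ?_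
    have hline : ∀ᵐ p ∂μ, p.1 ≠ ρ₀ := ae_ne_line μ Measure.restrict_le_self
    filter_upwards [haeHP, hline] with p hp hne
    have hp1 : (0:ℝ) < p.1 := hp
    have hcst : (0:ℝ) ≤ 9 * Ky ^ 2 / ρ₀ ^ 3 := by positivity
    have hrp : (0:ℝ) ≤ sgm p ^ (2*β-1) := Real.rpow_nonneg (sgm_pos p).le _
    rcases lt_or_gt_of_ne hne with hlt | hgt
    · -- inside the cylinder the field vanishes
      have h0 : gradSq yv p = 0 := gradSq_zero_of_locally_zero φ.hy0 hlt
      have : Grho p = 0 := by simp only [hGdef, h0]; ring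
      rw [this, norm_zero]
      positivity
    · -- outside: decay estimate
      have hX := X0_ge hJ (p := p) hp1
      have hXpos := X0_pos hJ (p := p) hp1
      have hWX : (p.1 ^ 4)⁻¹ * Real.exp (-2 * v0 J p) = (X0 J p ^ 2)⁻¹ :=
        exp_neg_two_v0 hJ hp1
      have hXsq : p.1 ^ 4 / 9 ≤ X0 J p ^ 2 := by nlinarith [sq_nonneg (p.1^2)]
      have hWle : (X0 J p ^ 2)⁻¹ ≤ 9 / p.1 ^ 4 := by
        rw [inv_le_comm₀ (by positivity) (by positivity), inv_div]
        exact hXsq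
      have hgr : gradSq yv p ≤ Ky ^ 2 * sgm p ^ (2*β-2) :=
        gradSq_le_of_wFn (hKyB p hgt)
      have hnn : 0 ≤ Grho p := mul_nonneg (mul_nonneg (hW_nonneg p) (gradSq_nonneg _ _)) hp1.le
      rw [Real.norm_of_nonneg hnn]
      have step1 : Grho p ≤ 9 / p.1 ^ 4 * (Ky ^ 2 * sgm p ^ (2*β-2)) * p.1 := by
        simp only [hGdef, hWX]
        have e1 : (X0 J p ^ 2)⁻¹ * gradSq yv p ≤ (9 / p.1 ^ 4) * (Ky ^ 2 * sgm p ^ (2*β-2)) := by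
          apply mul_le_mul hWle hgr (gradSq_nonneg _ _) (by positivity)
        exact mul_le_mul_of_nonneg_right e1 hp1.le
      refine step1.trans ?_
      have e2 : 9 / p.1 ^ 4 * (Ky ^ 2 * sgm p ^ (2*β-2)) * p.1
          = (9 * Ky ^ 2 / p.1 ^ 3) * sgm p ^ (2*β-2) := by
        field_simp
      rw [e2]
      have e3 : 9 * Ky ^ 2 / p.1 ^ 3 ≤ 9 * Ky ^ 2 / ρ₀ ^ 3 := by
        exact div_le_div_of_nonneg_left (by positivity) (by positivity)
          (pow_le_pow_left₀ hρ₀.le hgt.le 3)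
      have e4 : sgm p ^ (2*β-2) ≤ sgm p ^ (2*β-1) :=
        Real.rpow_le_rpow_of_exponent_le (sgm_ge_one p) (by linarith)
      calc (9 * Ky ^ 2 / p.1 ^ 3) * sgm p ^ (2*β-2)
          ≤ (9 * Ky ^ 2 / ρ₀ ^ 3) * sgm p ^ (2*β-2) :=
            mul_le_mul_of_nonneg_right e3 (Real.rpow_nonneg (sgm_pos p).le _)
        _ ≤ (9 * Ky ^ 2 / ρ₀ ^ 3) * sgm p ^ (2*β-1) :=
            mul_le_mul_of_nonneg_left e4 hcst
  -- the pointwise expansion of the integrand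
  have hexpand : ∀ t : ℝ, ∀ p ∈ HP,
      (gradSq (fun q => v0 J q + t * a q) p +
        (p.1 ^ 4)⁻¹ * Real.exp (-2 * (v0 J p + t * a p)) *
          gradSq (fun q => Y0 J q + t * yv q) p) * p.1
      = Arho p + 2*t*Brho p + t^2*Crho p +
        (a p ^ 0 * Real.exp (-2*t*a p) * Drho p +
          2*t*(a p ^ 0 * Real.exp (-2*t*a p) * Erho p) +
          t^2*(a p ^ 0 * Real.exp (-2*t*a p) * Grho p)) := by
    intro t p hp
    have hp1 : (0:ℝ) < p.1 := hp
    have h1 := gradSq_expand (f := v0 J) (g := a) (p := p) t (diff_v0 hJ hp1) (hadiff p)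
    have h2 := gradSq_expand (f := Y0 J) (g := yv) (p := p) t (diff_Y0 hJ hp1) (hydiff p)
    have h3 : Real.exp (-2 * (v0 J p + t * a p))
        = Real.exp (-2 * v0 J p) * Real.exp (-2*t*a p) := by
      rw [← Real.exp_add]; congr 1; ring
    rw [h1, h2, h3]
    simp only [hAdef, hBdef, hCdef, hDdef, hEdef, hGdef, pow_zero, one_mul]
    ring
  by_cases hAD : Integrable (fun p => Arho p + Drho p) μ
  · -- Case 1: everything is integrable; differentiate under the integral sign.
    have hA : Integrable Arho μ := by
      refine hAD.mono' mA ?_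
      filter_upwards [hA_nn, hD_nn] with p h1 h2
      rw [Real.norm_of_nonneg h1]; linarith
    have hD : Integrable Drho μ := by
      refine hAD.mono' mD ?_
      filter_upwards [hA_nn, hD_nn] with p h1 h2
      rw [Real.norm_of_nonneg h2]; linarith
    have hB : Integrable Brho μ := by
      refine ((hA.add hC).div_const 2).mono' mB ?_
      filter_upwards [haeHP] with p hp
      have hp1 : (0:ℝ) < p.1 := hp
      have h1 := abs_gradDot_le (v0 J) a p
      rw [Real.norm_eq_abs, hBdef]
      simp only
      rw [abs_mul, abs_of_pos hp1]
      calc |gradDot (v0 J) a p| * p.1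
          ≤ ((gradSq (v0 J) p + gradSq a p) / 2) * p.1 :=
            mul_le_mul_of_nonneg_right h1 hp1.le
        _ = (Arho p + Crho p) / 2 := by simp only [hAdef, hCdef]; ring
    have hE : Integrable Erho μ := by
      refine ((hD.add hG).div_const 2).mono' mE ?_
      filter_upwards [haeHP] with p hp
      have hp1 : (0:ℝ) < p.1 := hp
      have h1 := abs_gradDot_le (Y0 J) yv p
      rw [Real.norm_eq_abs, hEdef]
      simp only
      rw [abs_mul, abs_of_pos hp1, abs_mul, abs_of_nonneg (hW_nonneg p)]
      calc (p.1 ^ 4)⁻¹ * Real.exp (-2 * v0 J p) * |gradDot (Y0 J) yv p| * p.1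
          ≤ (p.1 ^ 4)⁻¹ * Real.exp (-2 * v0 J p) *
              ((gradSq (Y0 J) p + gradSq yv p) / 2) * p.1 := by
            apply mul_le_mul_of_nonneg_right _ hp1.le
            exact mul_le_mul_of_nonneg_left h1 (hW_nonneg p)
        _ = (Drho p + Grho p) / 2 := by simp only [hDdef, hGdef]; ring
    -- derivative chains
    have key : ∀ H : ℝ × ℝ → ℝ, Integrable H μ → ∀ (n : ℕ) (t : ℝ),
        HasDerivAt (fun s => ∫ p, a p ^ n * Real.exp (-2*s*a p) * H p ∂μ)
          (-2 * ∫ p, a p ^ (n+1) * Real.exp (-2*t*a p) * H p ∂μ) t :=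
      fun H hH n t => gg_hasDerivAt hKa0 hameas habs hH n t
    have hC3g : ∀ H : ℝ × ℝ → ℝ, Integrable H μ →
        ContDiff ℝ (3:ℕ) (fun s => ∫ p, a p ^ 0 * Real.exp (-2*s*a p) * H p ∂μ) :=
      fun H hH => contDiff_of_deriv_chain
        (fun n s => ∫ p, a p ^ n * Real.exp (-2*s*a p) * H p ∂μ)
        (fun n t => key H hH n t) 3 0
    set IA := ∫ p, Arho p ∂μ
    set IB := ∫ p, Brho p ∂μ
    set IC := ∫ p, Crho p ∂μ
    set gD := fun s => ∫ p, a p ^ 0 * Real.exp (-2*s*a p) * Drho p ∂μ with hgDdef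
    set gE := fun s => ∫ p, a p ^ 0 * Real.exp (-2*s*a p) * Erho p ∂μ with hgEdef
    set gG := fun s => ∫ p, a p ^ 0 * Real.exp (-2*s*a p) * Grho p ∂μ with hgGdef
    have hiF : iF J ρ₀ β φ = fun t =>
        (1/16) * (IA + 2*t*IB + t^2*IC + (gD t + 2*t*gE t + t^2*gG t)) := by
      funext t
      simp only [iF, MF, intR3]
      rw [← hadef, ← hydef]
      have hcongr : (∫ p in HP,
          (gradSq (fun q => v0 J q + t * a q) p +
            (p.1 ^ 4)⁻¹ * Real.exp (-2 * (v0 J p + t * a p)) *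
              gradSq (fun q => Y0 J q + t * yv q) p) * p.1)
          = ∫ p, (Arho p + 2*t*Brho p + t^2*Crho p +
            (a p ^ 0 * Real.exp (-2*t*a p) * Drho p +
              2*t*(a p ^ 0 * Real.exp (-2*t*a p) * Erho p) +
              t^2*(a p ^ 0 * Real.exp (-2*t*a p) * Grho p))) ∂μ :=
        integral_congr_ae (haeHP.mono fun p hp => hexpand t p hp)
      have hiD := gg_integrable (μ := μ) hKa0 hameas habs hD 0 t
      have hiE := gg_integrable (μ := μ) hKa0 hameas habs hE 0 t
      have hiG := gg_integrable (μ := μ) hKa0 hameas habs hG 0 t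
      have hint2 : ∫ p, (Arho p + 2*t*Brho p + t^2*Crho p +
            (a p ^ 0 * Real.exp (-2*t*a p) * Drho p +
              2*t*(a p ^ 0 * Real.exp (-2*t*a p) * Erho p) +
              t^2*(a p ^ 0 * Real.exp (-2*t*a p) * Grho p))) ∂μ
          = IA + 2*t*IB + t^2*IC + (gD t + 2*t*gE t + t^2*gG t) := by
        have iB2 : Integrable (fun p => 2*t*Brho p) μ := hB.const_mul (2*t)
        have iC2 : Integrable (fun p => t^2*Crho p) μ := hC.const_mul (t^2)
        have iE2 : Integrable (fun p => 2*t*(a p ^ 0 * Real.exp (-2*t*a p) * Erho p)) μ :=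
          hiE.const_mul (2*t)
        have iG2 : Integrable (fun p => t^2*(a p ^ 0 * Real.exp (-2*t*a p) * Grho p)) μ :=
          hiG.const_mul (t^2)
        have i12 : Integrable (fun p => Arho p + 2*t*Brho p) μ := hA.add iB2
        have i123 : Integrable (fun p => Arho p + 2*t*Brho p + t^2*Crho p) μ := i12.add iC2
        have i45 : Integrable (fun p => a p ^ 0 * Real.exp (-2*t*a p) * Drho p
            + 2*t*(a p ^ 0 * Real.exp (-2*t*a p) * Erho p)) μ := hiD.add iE2
        have i456 : Integrable (fun p => a p ^ 0 * Real.exp (-2*t*a p) * Drho p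
            + 2*t*(a p ^ 0 * Real.exp (-2*t*a p) * Erho p)
            + t^2*(a p ^ 0 * Real.exp (-2*t*a p) * Grho p)) μ := i45.add iG2
        have e0 : ∫ p, (Arho p + 2*t*Brho p + t^2*Crho p +
              (a p ^ 0 * Real.exp (-2*t*a p) * Drho p +
                2*t*(a p ^ 0 * Real.exp (-2*t*a p) * Erho p) +
                t^2*(a p ^ 0 * Real.exp (-2*t*a p) * Grho p))) ∂μ
            = (∫ p, (Arho p + 2*t*Brho p + t^2*Crho p) ∂μ) +
              ∫ p, (a p ^ 0 * Real.exp (-2*t*a p) * Drho p +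
                2*t*(a p ^ 0 * Real.exp (-2*t*a p) * Erho p) +
                t^2*(a p ^ 0 * Real.exp (-2*t*a p) * Grho p)) ∂μ :=
          integral_add i123 i456
        have e1 : ∫ p, (Arho p + 2*t*Brho p + t^2*Crho p) ∂μ
            = (∫ p, (Arho p + 2*t*Brho p) ∂μ) + ∫ p, t^2*Crho p ∂μ :=
          integral_add i12 iC2
        have e2 : ∫ p, (Arho p + 2*t*Brho p) ∂μ
            = (∫ p, Arho p ∂μ) + ∫ p, 2*t*Brho p ∂μ := integral_add hA iB2
        have e3 : ∫ p, (a p ^ 0 * Real.exp (-2*t*a p) * Drho p +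
              2*t*(a p ^ 0 * Real.exp (-2*t*a p) * Erho p) +
              t^2*(a p ^ 0 * Real.exp (-2*t*a p) * Grho p)) ∂μ
            = (∫ p, (a p ^ 0 * Real.exp (-2*t*a p) * Drho p +
                2*t*(a p ^ 0 * Real.exp (-2*t*a p) * Erho p)) ∂μ) +
              ∫ p, t^2*(a p ^ 0 * Real.exp (-2*t*a p) * Grho p) ∂μ :=
          integral_add i45 iG2
        have e4 : ∫ p, (a p ^ 0 * Real.exp (-2*t*a p) * Drho p +
              2*t*(a p ^ 0 * Real.exp (-2*t*a p) * Erho p)) ∂μ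
            = (∫ p, a p ^ 0 * Real.exp (-2*t*a p) * Drho p ∂μ) +
              ∫ p, 2*t*(a p ^ 0 * Real.exp (-2*t*a p) * Erho p) ∂μ :=
          integral_add hiD iE2
        rw [e0, e1, e2, e3, e4, integral_const_mul (2*t), integral_const_mul (t^2),
          integral_const_mul (2*t), integral_const_mul (t^2)]
      rw [hcongr, hint2]
      have hπ : (π:ℝ) ≠ 0 := Real.pi_ne_zero
      field_simp
      ring
    rw [hiF]
    have c1 : ContDiff ℝ (3:ℕ) gD := hC3g Drho hD
    have c2 : ContDiff ℝ (3:ℕ) gE := hC3g Erho hE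
    have c3 : ContDiff ℝ (3:ℕ) gG := hC3g Grho hG
    have hid : ContDiff ℝ (3:ℕ) (fun t : ℝ => t) := contDiff_id
    have : ContDiff ℝ (3:ℕ) (fun t : ℝ =>
        (1/16) * (IA + 2*t*IB + t^2*IC + (gD t + 2*t*gE t + t^2*gG t))) := by
      refine contDiff_const.mul ?_
      refine ContDiff.add (ContDiff.add (ContDiff.add contDiff_const ?_) ?_) ?_
      · exact (contDiff_const.mul hid).mul contDiff_const
      · exact (hid.pow 2).mul contDiff_const
      · refine ContDiff.add (ContDiff.add c1 ?_) ?_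
        · exact (contDiff_const.mul hid).mul c2
        · exact (hid.pow 2).mul c3
    exact_mod_cast this
  · -- Case 2: the integrand is nowhere integrable, so iF ≡ 0.
    have hnone : ∀ t : ℝ, ¬ Integrable (fun p =>
        (gradSq (fun q => v0 J q + t * a q) p +
          (p.1 ^ 4)⁻¹ * Real.exp (-2 * (v0 J p + t * a p)) *
            gradSq (fun q => Y0 J q + t * yv q) p) * p.1) μ := by
      intro t hInt
      set vt := fun q : ℝ × ℝ => v0 J q + t * a q with hvtdef
      set Yt := fun q : ℝ × ℝ => Y0 J q + t * yv q with hYtdef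
      have mvt : Measurable vt := ((measurable_v0 J).add (hameas.const_mul t))
      have hInt' : Integrable (fun p =>
          (gradSq vt p + (p.1 ^ 4)⁻¹ * Real.exp (-2 * vt p) * gradSq Yt p) * p.1) μ := hInt
      have mFt : AEStronglyMeasurable (fun p =>
          (gradSq vt p + (p.1 ^ 4)⁻¹ * Real.exp (-2 * vt p) * gradSq Yt p) * p.1) μ :=
        (((measurable_gradSq vt).add
          ((((measurable_fst.pow_const 4).inv).mul
            (Real.measurable_exp.comp (mvt.const_mul (-2)))).mul
              (measurable_gradSq Yt))).mul measurable_fst).aestronglyMeasurable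
      have hFt_nonneg : ∀ᵐ p ∂μ, 0 ≤
          (gradSq vt p + (p.1 ^ 4)⁻¹ * Real.exp (-2 * vt p) * gradSq Yt p) * p.1 :=
        haeHP.mono fun p hp => by
          have hp1 : (0:ℝ) < p.1 := hp
          have := gradSq_nonneg vt p
          have := gradSq_nonneg Yt p
          have hw : (0:ℝ) ≤ (p.1 ^ 4)⁻¹ * Real.exp (-2 * vt p) := by positivity
          exact mul_nonneg (add_nonneg (gradSq_nonneg vt p)
            (mul_nonneg hw (gradSq_nonneg Yt p))) hp1.le
      -- the v-part alone is integrable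
      have h1 : Integrable (fun p => gradSq vt p * p.1) μ := by
        refine hInt'.mono' (((measurable_gradSq vt).mul measurable_fst).aestronglyMeasurable) ?_
        filter_upwards [haeHP] with p hp
        have hp1 : (0:ℝ) < p.1 := hp
        have h2 := gradSq_nonneg vt p
        have h3 := gradSq_nonneg Yt p
        have hw : (0:ℝ) ≤ (p.1 ^ 4)⁻¹ * Real.exp (-2 * vt p) := by positivity
        rw [Real.norm_of_nonneg (mul_nonneg h2 hp1.le)]
        exact mul_le_mul_of_nonneg_right
          (le_add_of_nonneg_right (mul_nonneg hw h3)) hp1.le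
      -- hence `Arho` is integrable
      have hA : Integrable Arho μ := by
        have hg : Integrable (fun p => 2*(gradSq vt p * p.1) + 2*t^2*(gradSq a p * p.1)) μ :=
          (h1.const_mul 2).add (hC.const_mul (2*t^2))
        refine hg.mono' mA ?_
        filter_upwards [haeHP] with p hp
        have hp1 : (0:ℝ) < p.1 := hp
        have hle : gradSq (v0 J) p ≤ 2 * gradSq vt p + 2 * t^2 * gradSq a p :=
          gradSq_le_of_sub t (diff_v0 hJ hp1) (hadiff p)
        rw [Real.norm_of_nonneg (mul_nonneg (gradSq_nonneg _ _) hp1.le)]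
        nlinarith [mul_le_mul_of_nonneg_right hle hp1.le]
      -- the Y-part alone is integrable
      have h2 : Integrable (fun p => (p.1 ^ 4)⁻¹ * Real.exp (-2 * vt p) * gradSq Yt p * p.1) μ := by
        refine hInt'.mono' ((((((measurable_fst.pow_const 4).inv).mul
            (Real.measurable_exp.comp (mvt.const_mul (-2)))).mul
              (measurable_gradSq Yt)).mul measurable_fst).aestronglyMeasurable) ?_
        filter_upwards [haeHP] with p hp
        have hp1 : (0:ℝ) < p.1 := hp
        have h3 := gradSq_nonneg vt p
        have h4 := gradSq_nonneg Yt p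
        have hw : (0:ℝ) ≤ (p.1 ^ 4)⁻¹ * Real.exp (-2 * vt p) := by positivity
        rw [Real.norm_of_nonneg (mul_nonneg (mul_nonneg hw h4) hp1.le)]
        exact mul_le_mul_of_nonneg_right (le_add_of_nonneg_left h3) hp1.le
      -- switch the exponential weight from `vt` back to `v0`
      have h5 : Integrable (fun p => (p.1 ^ 4)⁻¹ * Real.exp (-2 * v0 J p) * gradSq Yt p * p.1) μ := by
        refine (h2.const_mul (Real.exp (2 * |t| * Ka))).mono'
          ((((mW.mul (measurable_gradSq Yt))).mul measurable_fst).aestronglyMeasurable) ?_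
        filter_upwards [haeHP, habs] with p hp hpa
        have hp1 : (0:ℝ) < p.1 := hp
        have h4 := gradSq_nonneg Yt p
        have hsplit : Real.exp (-2 * v0 J p)
            = Real.exp (2*t*a p) * Real.exp (-2 * vt p) := by
          rw [← Real.exp_add]; congr 1; simp only [hvtdef]; ring
        have hexple : Real.exp (2*t*a p) ≤ Real.exp (2 * |t| * Ka) := by
          apply Real.exp_le_exp.2
          calc 2*t*a p ≤ |2 * t * a p| := le_abs_self _
            _ = 2 * |t| * |a p| := by rw [abs_mul, abs_mul]; simp
            _ ≤ 2 * |t| * Ka := by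
                have := abs_nonneg t; nlinarith [abs_nonneg (a p)]
        rw [Real.norm_of_nonneg (mul_nonneg (mul_nonneg
          (mul_nonneg (by positivity) (Real.exp_nonneg _)) h4) hp1.le)]
        rw [hsplit]
        have hw2 : (0:ℝ) ≤ (p.1 ^ 4)⁻¹ * Real.exp (-2 * vt p) := by positivity
        calc (p.1 ^ 4)⁻¹ * (Real.exp (2*t*a p) * Real.exp (-2 * vt p)) * gradSq Yt p * p.1
            = Real.exp (2*t*a p) * ((p.1 ^ 4)⁻¹ * Real.exp (-2 * vt p) * gradSq Yt p * p.1) := by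
              ring
          _ ≤ Real.exp (2 * |t| * Ka) * ((p.1 ^ 4)⁻¹ * Real.exp (-2 * vt p) * gradSq Yt p * p.1) := by
              apply mul_le_mul_of_nonneg_right hexple
              positivity
      -- hence `Drho` is integrable
      have hD : Integrable Drho μ := by
        have hg : Integrable (fun p =>
            2*((p.1 ^ 4)⁻¹ * Real.exp (-2 * v0 J p) * gradSq Yt p * p.1)
            + 2*t^2*((p.1 ^ 4)⁻¹ * Real.exp (-2 * v0 J p) * gradSq yv p * p.1)) μ :=
          (h5.const_mul 2).add (hG.const_mul (2*t^2))
        refine hg.mono' mD ?_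
        filter_upwards [haeHP] with p hp
        have hp1 : (0:ℝ) < p.1 := hp
        have hle : gradSq (Y0 J) p ≤ 2 * gradSq Yt p + 2 * t^2 * gradSq yv p :=
          gradSq_le_of_sub t (diff_Y0 hJ hp1) (hydiff p)
        have hw : (0:ℝ) ≤ (p.1 ^ 4)⁻¹ * Real.exp (-2 * v0 J p) := hW_nonneg p
        rw [Real.norm_of_nonneg (mul_nonneg (mul_nonneg hw (gradSq_nonneg _ _)) hp1.le)]
        have hle2 : (p.1 ^ 4)⁻¹ * Real.exp (-2 * v0 J p) * gradSq (Y0 J) p * p.1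
            ≤ (p.1 ^ 4)⁻¹ * Real.exp (-2 * v0 J p) *
              (2 * gradSq Yt p + 2 * t^2 * gradSq yv p) * p.1 := by
          apply mul_le_mul_of_nonneg_right _ hp1.le
          exact mul_le_mul_of_nonneg_left hle hw
        nlinarith [hle2]
      exact hAD (hA.add hD)
    have hiF0 : iF J ρ₀ β φ = fun _ => (0:ℝ) := by
      funext t
      simp only [iF, MF, intR3]
      rw [← hadef, ← hydef, integral_undef (hnone t)]
      ring
    rw [hiF0]
    exact contDiff_const
end
end

section
/- Carter's identity: let v, Y, α, y be C² axisymmetric functions and set X = ρ² e^{v}. Define G_v = Δv + X⁻² |∂Y|², G_Y = div(X⁻² ∂Y), G'_v = Δα + (2 ∂y·∂Y − 2α |∂Y|²) X⁻², G'_Y = div(X⁻² (∂y − 2α ∂Y)), and F = |∂α + y X⁻² ∂Y|² + |∂(y X⁻¹) − X⁻¹ α ∂Y|² + |X⁻¹ α ∂Y − y X⁻² ∂X|². Then at every point with ρ > 0, F + α G'_v + y G'_Y + 2 α y G_Y − X⁻² y² G_v = div(α ∂α + y X⁻¹ ∂(y X⁻¹)). -/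
open Real MeasureTheory

noncomputable section

/-- X = ρ² e^v. -/
def Xof (v : ℝ × ℝ → ℝ) (p : ℝ × ℝ) : ℝ := p.1 ^ 2 * Real.exp (v p)

/-- G_v = Δv + X⁻² |∂Y|². -/
def Gv (v Y : ℝ × ℝ → ℝ) (p : ℝ × ℝ) : ℝ :=
  lap v p + ((Xof v p) ^ 2)⁻¹ * gradSq Y p

/-- G_Y = div(X⁻² ∂Y). -/
def GY (v Y : ℝ × ℝ → ℝ) (p : ℝ × ℝ) : ℝ :=
  divg (fun q => ((Xof v q) ^ 2)⁻¹ * pdR Y q) (fun q => ((Xof v q) ^ 2)⁻¹ * pdZ Y q) p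

/-- G'_v = Δα + (2 ∂y·∂Y − 2α |∂Y|²) X⁻². -/
def Gv' (v Y a y : ℝ × ℝ → ℝ) (p : ℝ × ℝ) : ℝ :=
  lap a p + (2 * gradDot y Y p - 2 * a p * gradSq Y p) * ((Xof v p) ^ 2)⁻¹

/-- G'_Y = div(X⁻² (∂y − 2α ∂Y)). -/
def GY' (v Y a y : ℝ × ℝ → ℝ) (p : ℝ × ℝ) : ℝ :=
  divg (fun q => ((Xof v q) ^ 2)⁻¹ * (pdR y q - 2 * a q * pdR Y q))
       (fun q => ((Xof v q) ^ 2)⁻¹ * (pdZ y q - 2 * a q * pdZ Y q)) p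

/-- F = |∂α + yX⁻²∂Y|² + |∂(yX⁻¹) − X⁻¹α∂Y|² + |X⁻¹α∂Y − yX⁻²∂X|². -/
def Fc (v Y a y : ℝ × ℝ → ℝ) (p : ℝ × ℝ) : ℝ :=
  (pdR a p + y p * ((Xof v p) ^ 2)⁻¹ * pdR Y p) ^ 2 +
    (pdZ a p + y p * ((Xof v p) ^ 2)⁻¹ * pdZ Y p) ^ 2 +
  ((pdR (fun q => y q * (Xof v q)⁻¹) p - (Xof v p)⁻¹ * a p * pdR Y p) ^ 2 +
    (pdZ (fun q => y q * (Xof v q)⁻¹) p - (Xof v p)⁻¹ * a p * pdZ Y p) ^ 2) +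
  (((Xof v p)⁻¹ * a p * pdR Y p - y p * ((Xof v p) ^ 2)⁻¹ * pdR (Xof v) p) ^ 2 +
    ((Xof v p)⁻¹ * a p * pdZ Y p - y p * ((Xof v p) ^ 2)⁻¹ * pdZ (Xof v) p) ^ 2)

namespace CarterAux

variable {f g v y Y a : ℝ × ℝ → ℝ} {p w : ℝ × ℝ} {c : ℝ}

lemma Dadd (hf : DifferentiableAt ℝ f p) (hg : DifferentiableAt ℝ g p) :
    fderiv ℝ (fun q => f q + g q) p w = fderiv ℝ f p w + fderiv ℝ g p w := by
  rw [fderiv_fun_add hf hg]; simp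

lemma Dsub (hf : DifferentiableAt ℝ f p) (hg : DifferentiableAt ℝ g p) :
    fderiv ℝ (fun q => f q - g q) p w = fderiv ℝ f p w - fderiv ℝ g p w := by
  rw [fderiv_fun_sub hf hg]; simp

lemma Dmul (hf : DifferentiableAt ℝ f p) (hg : DifferentiableAt ℝ g p) :
    fderiv ℝ (fun q => f q * g q) p w = fderiv ℝ f p w * g p + f p * fderiv ℝ g p w := by
  rw [fderiv_fun_mul hf hg]; simp; ring

lemma Dcmul (hf : DifferentiableAt ℝ f p) :
    fderiv ℝ (fun q => c * f q) p w = c * fderiv ℝ f p w := by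
  rw [fderiv_const_mul hf]; simp

lemma Dneg : fderiv ℝ (fun q => -f q) p w = -fderiv ℝ f p w := by
  rw [fderiv_fun_neg]; simp

lemma Dexp (hf : DifferentiableAt ℝ f p) :
    fderiv ℝ (fun q => Real.exp (f q)) p w = Real.exp (f p) * fderiv ℝ f p w := by
  rw [fderiv_exp hf]; simp

lemma Dinv (hf : DifferentiableAt ℝ f p) (h0 : f p ≠ 0) :
    fderiv ℝ (fun q => (f q)⁻¹) p w = -fderiv ℝ f p w * ((f p) ^ 2)⁻¹ := by
  have h := ((hasFDerivAt_inv h0).comp p hf.hasFDerivAt).fderiv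
  have : fderiv ℝ (fun q => (f q)⁻¹) p = fderiv ℝ ((fun x : ℝ => x⁻¹) ∘ f) p := rfl
  rw [this, h]
  simp [ContinuousLinearMap.comp_apply]

lemma Dfst : fderiv ℝ (fun q : ℝ × ℝ => q.1) p w = w.1 := by
  have : fderiv ℝ (fun q : ℝ × ℝ => q.1) p = ContinuousLinearMap.fst ℝ ℝ ℝ := fderiv_fst
  rw [this]; rfl

lemma Dsq1 : fderiv ℝ (fun q : ℝ × ℝ => q.1 ^ 2) p w = 2 * p.1 * w.1 := by
  have h : (fun q : ℝ × ℝ => q.1 ^ 2) = fun q : ℝ × ℝ => q.1 * q.1 := by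
    funext q; ring
  rw [h, Dmul differentiableAt_fst differentiableAt_fst, Dfst]; ring

lemma Dpow2 (hf : DifferentiableAt ℝ f p) :
    fderiv ℝ (fun q => f q ^ 2) p w = 2 * f p * fderiv ℝ f p w := by
  have h : (fun q => f q ^ 2) = fun q => f q * f q := by funext q; ring
  rw [h, Dmul hf hf]; ring

lemma cd_D (hf : ContDiff ℝ 2 f) (w : ℝ × ℝ) :
    ContDiff ℝ 1 (fun q => fderiv ℝ f q w) :=
  (hf.fderiv_right (by norm_num)).clm_apply contDiff_const

lemma d_D (hf : ContDiff ℝ 2 f) (w p : ℝ × ℝ) :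
    DifferentiableAt ℝ (fun q => fderiv ℝ f q w) p :=
  ((cd_D hf w).differentiable (by norm_num)).differentiableAt


lemma cdX (hv : ContDiff ℝ 2 v) : ContDiff ℝ 2 (Xof v) := by
  unfold Xof
  exact (contDiff_fst.pow 2).mul hv.exp

lemma dX (hv : ContDiff ℝ 2 v) (q : ℝ × ℝ) : DifferentiableAt ℝ (Xof v) q :=
  ((cdX hv).differentiable (by norm_num)).differentiableAt

lemma X_ne {q : ℝ × ℝ} (hq : q.1 ≠ 0) : Xof v q ≠ 0 :=
  mul_ne_zero (pow_ne_zero 2 hq) (Real.exp_ne_zero _)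

lemma DXfun (hv : ContDiff ℝ 2 v) (q w : ℝ × ℝ) :
    fderiv ℝ (Xof v) q w = (2 * q.1 * w.1 + q.1 ^ 2 * fderiv ℝ v q w) * Real.exp (v q) := by
  have hv1 : DifferentiableAt ℝ v q := (hv.differentiable (by norm_num)).differentiableAt
  have h : Xof v = fun q : ℝ × ℝ => q.1 ^ 2 * Real.exp (v q) := rfl
  rw [h, Dmul (f := fun q : ℝ × ℝ => q.1 ^ 2) (g := fun q => Real.exp (v q)) (differentiableAt_fst.pow 2) hv1.exp, Dsq1, Dexp hv1]
  ring

lemma DDX (hv : ContDiff ℝ 2 v) (p w : ℝ × ℝ) :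
    fderiv ℝ (fun q => fderiv ℝ (Xof v) q w) p w =
      ((2 * (w.1 * w.1) + 2 * p.1 * w.1 * fderiv ℝ v p w
          + p.1 ^ 2 * fderiv ℝ (fun q => fderiv ℝ v q w) p w)
        + (2 * p.1 * w.1 + p.1 ^ 2 * fderiv ℝ v p w) * fderiv ℝ v p w) * Real.exp (v p) := by
  have hv1 : Differentiable ℝ v := hv.differentiable (by norm_num)
  have hDv : DifferentiableAt ℝ (fun q => fderiv ℝ v q w) p := d_D hv w p
  have hfun : (fun q => fderiv ℝ (Xof v) q w)
      = fun q => (2 * q.1 * w.1 + q.1 ^ 2 * fderiv ℝ v q w) * Real.exp (v q) := by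
    funext q; exact DXfun hv q w
  rw [hfun]
  have h1 : DifferentiableAt ℝ (fun q : ℝ × ℝ => 2 * q.1 * w.1) p :=
    (differentiableAt_fst.const_mul 2).mul_const w.1
  have h2 : DifferentiableAt ℝ (fun q : ℝ × ℝ => q.1 ^ 2 * fderiv ℝ v q w) p :=
    (differentiableAt_fst.pow 2).mul hDv
  rw [Dmul (f := fun q : ℝ × ℝ => 2 * q.1 * w.1 + q.1 ^ 2 * fderiv ℝ v q w) (g := fun q => Real.exp (v q)) (h1.add h2) ((hv1 p).exp), Dadd h1 h2,
    Dmul (f := fun q : ℝ × ℝ => 2 * q.1) (g := fun _ => w.1) (differentiableAt_fst.const_mul 2) (differentiableAt_const w.1),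
    Dcmul differentiableAt_fst, Dfst,
    Dmul (f := fun q : ℝ × ℝ => q.1 ^ 2) (differentiableAt_fst.pow 2) hDv, Dsq1, Dexp (hv1 p)]
  simp only [fderiv_fun_const, Pi.zero_apply, ContinuousLinearMap.zero_apply]
  ring


lemma Dh (hv : ContDiff ℝ 2 v) (hy : ContDiff ℝ 2 y) {q : ℝ × ℝ} (hq : q.1 ≠ 0) (w : ℝ × ℝ) :
    fderiv ℝ (fun s => y s * (Xof v s)⁻¹) q w
      = fderiv ℝ y q w * (Xof v q)⁻¹
        - y q * (fderiv ℝ (Xof v) q w * ((Xof v q) ^ 2)⁻¹) := by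
  have hy1 : DifferentiableAt ℝ y q := (hy.differentiable (by norm_num)).differentiableAt
  have hX := dX hv q
  have hX0 : Xof v q ≠ 0 := X_ne hq
  rw [Dmul (g := fun s => (Xof v s)⁻¹) hy1 (hX.inv hX0), Dinv hX hX0]
  ring

lemma DDh (hv : ContDiff ℝ 2 v) (hy : ContDiff ℝ 2 y) {p : ℝ × ℝ} (hp : p.1 ≠ 0) (w : ℝ × ℝ) :
    fderiv ℝ (fun q => fderiv ℝ (fun s => y s * (Xof v s)⁻¹) q w) p w
      = fderiv ℝ (fun q => fderiv ℝ y q w) p w * (Xof v p)⁻¹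
        - 2 * fderiv ℝ y p w * fderiv ℝ (Xof v) p w * ((Xof v p) ^ 2)⁻¹
        - y p * fderiv ℝ (fun q => fderiv ℝ (Xof v) q w) p w * ((Xof v p) ^ 2)⁻¹
        + 2 * y p * (fderiv ℝ (Xof v) p w) ^ 2 * ((Xof v p) ^ 3)⁻¹ := by
  have hopen : IsOpen {q : ℝ × ℝ | q.1 ≠ 0} := isOpen_compl_singleton.preimage continuous_fst
  have hmem : {q : ℝ × ℝ | q.1 ≠ 0} ∈ nhds p := hopen.mem_nhds hp
  have hEv : (fun q => fderiv ℝ (fun s => y s * (Xof v s)⁻¹) q w)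
      =ᶠ[nhds p] (fun q => fderiv ℝ y q w * (Xof v q)⁻¹
        - y q * (fderiv ℝ (Xof v) q w * ((Xof v q) ^ 2)⁻¹)) :=
    Filter.eventuallyEq_of_mem hmem (fun q hq => Dh hv hy hq w)
  rw [hEv.fderiv_eq]
  have hy1 : Differentiable ℝ y := hy.differentiable (by norm_num)
  have hX0 : Xof v p ≠ 0 := X_ne hp
  have hXd := dX hv p
  have hDy : DifferentiableAt ℝ (fun q => fderiv ℝ y q w) p := d_D hy w p
  have hDX : DifferentiableAt ℝ (fun q => fderiv ℝ (Xof v) q w) p := d_D (cdX hv) w p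
  have hXinv : DifferentiableAt ℝ (fun q => (Xof v q)⁻¹) p := hXd.inv hX0
  have hXsq : DifferentiableAt ℝ (fun q => (Xof v q) ^ 2) p := hXd.pow 2
  have hXsqinv : DifferentiableAt ℝ (fun q => ((Xof v q) ^ 2)⁻¹) p :=
    hXsq.inv (pow_ne_zero 2 hX0)
  rw [Dsub (f := fun q => fderiv ℝ y q w * (Xof v q)⁻¹) (g := fun q => y q * (fderiv ℝ (Xof v) q w * ((Xof v q) ^ 2)⁻¹)) (hDy.mul hXinv) ((hy1.differentiableAt).mul (hDX.mul hXsqinv)),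
      Dmul hDy hXinv, Dinv hXd hX0,
      Dmul (g := fun q => fderiv ℝ (Xof v) q w * ((Xof v q) ^ 2)⁻¹) (hy1.differentiableAt) (hDX.mul hXsqinv),
      Dmul hDX hXsqinv, Dinv hXsq (pow_ne_zero 2 hX0), Dpow2 hXd]
  field_simp
  ring


lemma DWGY (hv : ContDiff ℝ 2 v) (hY : ContDiff ℝ 2 Y) {p : ℝ × ℝ} (hp : p.1 ≠ 0) (w : ℝ × ℝ) :
    fderiv ℝ (fun q => ((Xof v q) ^ 2)⁻¹ * fderiv ℝ Y q w) p w
      = -(2 * fderiv ℝ (Xof v) p w * fderiv ℝ Y p w) * ((Xof v p) ^ 3)⁻¹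
        + fderiv ℝ (fun q => fderiv ℝ Y q w) p w * ((Xof v p) ^ 2)⁻¹ := by
  have hX0 : Xof v p ≠ 0 := X_ne hp
  have hXd := dX hv p
  have hDY : DifferentiableAt ℝ (fun q => fderiv ℝ Y q w) p := d_D hY w p
  have hXsq : DifferentiableAt ℝ (fun q => (Xof v q) ^ 2) p := hXd.pow 2
  have hXsqinv : DifferentiableAt ℝ (fun q => ((Xof v q) ^ 2)⁻¹) p :=
    hXsq.inv (pow_ne_zero 2 hX0)
  rw [Dmul hXsqinv hDY, Dinv hXsq (pow_ne_zero 2 hX0), Dpow2 hXd]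
  field_simp

lemma DWGYp (hv : ContDiff ℝ 2 v) (hY : ContDiff ℝ 2 Y) (ha : ContDiff ℝ 2 a)
    (hy : ContDiff ℝ 2 y) {p : ℝ × ℝ} (hp : p.1 ≠ 0) (w : ℝ × ℝ) :
    fderiv ℝ (fun q => ((Xof v q) ^ 2)⁻¹ * (fderiv ℝ y q w - 2 * a q * fderiv ℝ Y q w)) p w
      = -(2 * fderiv ℝ (Xof v) p w * (fderiv ℝ y p w - 2 * a p * fderiv ℝ Y p w))
          * ((Xof v p) ^ 3)⁻¹
        + (fderiv ℝ (fun q => fderiv ℝ y q w) p w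
            - (2 * fderiv ℝ a p w * fderiv ℝ Y p w
                + 2 * a p * fderiv ℝ (fun q => fderiv ℝ Y q w) p w))
          * ((Xof v p) ^ 2)⁻¹ := by
  have hX0 : Xof v p ≠ 0 := X_ne hp
  have hXd := dX hv p
  have ha1 : DifferentiableAt ℝ a p := (ha.differentiable (by norm_num)).differentiableAt
  have hDY : DifferentiableAt ℝ (fun q => fderiv ℝ Y q w) p := d_D hY w p
  have hDy : DifferentiableAt ℝ (fun q => fderiv ℝ y q w) p := d_D hy w p
  have hXsq : DifferentiableAt ℝ (fun q => (Xof v q) ^ 2) p := hXd.pow 2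
  have hXsqinv : DifferentiableAt ℝ (fun q => ((Xof v q) ^ 2)⁻¹) p :=
    hXsq.inv (pow_ne_zero 2 hX0)
  have h2a : DifferentiableAt ℝ (fun q => 2 * a q) p := ha1.const_mul 2
  rw [Dmul (g := fun q => fderiv ℝ y q w - 2 * a q * fderiv ℝ Y q w) hXsqinv (hDy.sub (h2a.mul hDY)), Dinv hXsq (pow_ne_zero 2 hX0), Dpow2 hXd,
      Dsub (g := fun q => 2 * a q * fderiv ℝ Y q w) hDy (h2a.mul hDY), Dmul h2a hDY, Dcmul ha1]
  field_simp

lemma DRHS (hv : ContDiff ℝ 2 v) (ha : ContDiff ℝ 2 a) (hy : ContDiff ℝ 2 y)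
    {p : ℝ × ℝ} (hp : p.1 ≠ 0) (w : ℝ × ℝ) :
    fderiv ℝ (fun q => a q * fderiv ℝ a q w
        + y q * (Xof v q)⁻¹ * fderiv ℝ (fun s => y s * (Xof v s)⁻¹) q w) p w
      = fderiv ℝ a p w * fderiv ℝ a p w + a p * fderiv ℝ (fun q => fderiv ℝ a q w) p w
        + (fderiv ℝ y p w * (Xof v p)⁻¹
            - y p * (fderiv ℝ (Xof v) p w * ((Xof v p) ^ 2)⁻¹)) ^ 2
        + y p * (Xof v p)⁻¹ *
            (fderiv ℝ (fun q => fderiv ℝ y q w) p w * (Xof v p)⁻¹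
              - 2 * fderiv ℝ y p w * fderiv ℝ (Xof v) p w * ((Xof v p) ^ 2)⁻¹
              - y p * fderiv ℝ (fun q => fderiv ℝ (Xof v) q w) p w * ((Xof v p) ^ 2)⁻¹
              + 2 * y p * (fderiv ℝ (Xof v) p w) ^ 2 * ((Xof v p) ^ 3)⁻¹) := by
  have hX0 : Xof v p ≠ 0 := X_ne hp
  have hXd := dX hv p
  have ha1 : DifferentiableAt ℝ a p := (ha.differentiable (by norm_num)).differentiableAt
  have hy1 : DifferentiableAt ℝ y p := (hy.differentiable (by norm_num)).differentiableAt
  have hDa : DifferentiableAt ℝ (fun q => fderiv ℝ a q w) p := d_D ha w p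
  have hDy : DifferentiableAt ℝ (fun q => fderiv ℝ y q w) p := d_D hy w p
  have hDX : DifferentiableAt ℝ (fun q => fderiv ℝ (Xof v) q w) p := d_D (cdX hv) w p
  have hXinv : DifferentiableAt ℝ (fun q => (Xof v q)⁻¹) p := hXd.inv hX0
  have hXsq : DifferentiableAt ℝ (fun q => (Xof v q) ^ 2) p := hXd.pow 2
  have hXsqinv : DifferentiableAt ℝ (fun q => ((Xof v q) ^ 2)⁻¹) p :=
    hXsq.inv (pow_ne_zero 2 hX0)
  have hopen : IsOpen {q : ℝ × ℝ | q.1 ≠ 0} := isOpen_compl_singleton.preimage continuous_fst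
  have hmem : {q : ℝ × ℝ | q.1 ≠ 0} ∈ nhds p := hopen.mem_nhds hp
  have hEv : (fun q => fderiv ℝ (fun s => y s * (Xof v s)⁻¹) q w)
      =ᶠ[nhds p] (fun q => fderiv ℝ y q w * (Xof v q)⁻¹
        - y q * (fderiv ℝ (Xof v) q w * ((Xof v q) ^ 2)⁻¹)) :=
    Filter.eventuallyEq_of_mem hmem (fun q hq => Dh hv hy hq w)
  have hDh' : DifferentiableAt ℝ
      (fun q => fderiv ℝ (fun s => y s * (Xof v s)⁻¹) q w) p := by
    rw [hEv.differentiableAt_iff]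
    exact (hDy.mul hXinv).sub (hy1.mul (hDX.mul hXsqinv))
  rw [Dadd (f := fun q => a q * fderiv ℝ a q w) (g := fun q => y q * (Xof v q)⁻¹ * fderiv ℝ (fun s => y s * (Xof v s)⁻¹) q w) (ha1.mul hDa) ((hy1.mul hXinv).mul hDh'),
      Dmul ha1 hDa, Dmul (f := fun q => y q * (Xof v q)⁻¹) (hy1.mul hXinv) hDh',
      Dmul hy1 hXinv, Dinv hXd hX0, DDh hv hy hp w]
  ring

end CarterAux

/-- Carter's identity: for C² axisymmetric functions v, Y, α, y and
X = ρ² e^v, at every point with ρ > 0,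
F + α G'_v + y G'_Y + 2αy G_Y − X⁻² y² G_v = div(α ∂α + y X⁻¹ ∂(y X⁻¹)). -/
theorem carter_identity (v Y a y : ℝ × ℝ → ℝ)
    (hv : ContDiff ℝ 2 v) (hY : ContDiff ℝ 2 Y)
    (ha : ContDiff ℝ 2 a) (hy : ContDiff ℝ 2 y) :
    ∀ p : ℝ × ℝ, 0 < p.1 →
      Fc v Y a y p + a p * Gv' v Y a y p + y p * GY' v Y a y p +
          2 * a p * y p * GY v Y p - ((Xof v p) ^ 2)⁻¹ * (y p) ^ 2 * Gv v Y p =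
        divg
          (fun q => a q * pdR a q +
            y q * (Xof v q)⁻¹ * pdR (fun s => y s * (Xof v s)⁻¹) q)
          (fun q => a q * pdZ a q +
            y q * (Xof v q)⁻¹ * pdZ (fun s => y s * (Xof v s)⁻¹) q) p := by
  intro p hp
  have hρ : p.1 ≠ 0 := ne_of_gt hp
  have hX0 : Xof v p ≠ 0 := CarterAux.X_ne hρ
  have hE : Real.exp (v p) ≠ 0 := Real.exp_ne_zero _
  have epdR : pdR = fun f (q : ℝ × ℝ) => fderiv ℝ f q ((1 : ℝ), (0 : ℝ)) := rfl
  have epdZ : pdZ = fun f (q : ℝ × ℝ) => fderiv ℝ f q ((0 : ℝ), (1 : ℝ)) := rfl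
  simp only [Fc, Gv', GY', GY, Gv, divg, lap, gradSq, gradDot, epdR, epdZ]
  rw [CarterAux.Dh hv hy hρ ((1 : ℝ), (0 : ℝ)), CarterAux.Dh hv hy hρ ((0 : ℝ), (1 : ℝ)),
      CarterAux.DWGYp hv hY ha hy hρ ((1 : ℝ), (0 : ℝ)),
      CarterAux.DWGYp hv hY ha hy hρ ((0 : ℝ), (1 : ℝ)),
      CarterAux.DWGY hv hY hρ ((1 : ℝ), (0 : ℝ)), CarterAux.DWGY hv hY hρ ((0 : ℝ), (1 : ℝ)),
      CarterAux.DRHS hv ha hy hρ ((1 : ℝ), (0 : ℝ)), CarterAux.DRHS hv ha hy hρ ((0 : ℝ), (1 : ℝ)),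
      CarterAux.DDX hv p ((1 : ℝ), (0 : ℝ)), CarterAux.DDX hv p ((0 : ℝ), (1 : ℝ)),
      CarterAux.DXfun hv p ((1 : ℝ), (0 : ℝ)), CarterAux.DXfun hv p ((0 : ℝ), (1 : ℝ))]
  simp only [Xof]
  field_simp
  ring
end
end

section
/- There exists a constant C₁ > 0, depending only on J, such that for all (ρ, z) with ρ > 0 the extreme Kerr data satisfy |∂Y₀|² ≤ C₁ X₀² r⁻² (equivalently, |∂Y₀|² / X₀² ≤ C₁ r⁻²). -/
open Real MeasureTheory

noncomputable section

lemma kerr_pdR_val (J : ℝ) (hJ : J ≠ 0) (p : ℝ × ℝ) (hp : 0 < p.1) :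
    pdR (Y0 J) p = (6*J*p.1^3*p.2*(rr p)^4*(Sg J p)^2
      - 2*J^2*p.1^3*p.2*(4*(rr p)^2-5*p.1^2)*(rr p)^2*(Sg J p)
      + 4*J^2*p.2*p.1^5*(rt J p)*(rr p)^3
      - 4*J^2* |J| *p.2*p.1^5*((rr p)^2-p.1^2)) / ((rr p)^9*(Sg J p)^2) := by
  have hq : (0:ℝ) < p.1 ^ 2 + p.2 ^ 2 := by positivity
  have hr0 : 0 < rr p := Real.sqrt_pos.2 hq
  have hrr : rr p ^ 2 = p.1 ^ 2 + p.2 ^ 2 := Real.sq_sqrt hq.le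
  have haJ : (0:ℝ) < Real.sqrt |J| := Real.sqrt_pos.2 (abs_pos.2 hJ)
  have hRt : 0 < rt J p := by unfold rt; positivity
  have hSg : 0 < Sg J p := by unfold Sg; positivity
  have hfst2 : HasFDerivAt (fun w : ℝ × ℝ => w.1 ^ 2) ((2 * p.1 ^ 1) • ContinuousLinearMap.fst ℝ ℝ ℝ) p :=
    (hasDerivAt_pow 2 p.1).comp_hasFDerivAt p hasFDerivAt_fst
  have hsnd2 : HasFDerivAt (fun w : ℝ × ℝ => w.2 ^ 2) ((2 * p.2 ^ 1) • ContinuousLinearMap.snd ℝ ℝ ℝ) p :=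
    (hasDerivAt_pow 2 p.2).comp_hasFDerivAt p hasFDerivAt_snd
  have hr : HasFDerivAt rr _ p := (hfst2.add hsnd2).sqrt hq.ne'
  have hrinv := (hasDerivAt_inv hr0.ne').comp_hasFDerivAt p hr
  have hC : HasFDerivAt cosT _ p := hasFDerivAt_snd.mul hrinv
  have hC3 := (hasDerivAt_pow 3 (cosT p)).comp_hasFDerivAt p hC
  have hT1 := (hC3.sub (hC.const_mul 3)).const_mul (2*J)
  have hrsq := (hasDerivAt_pow 2 (rr p)).comp_hasFDerivAt p hr
  have hrsqinv := (hasDerivAt_inv (pow_ne_zero 2 hr0.ne')).comp_hasFDerivAt p hrsq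
  have hS2 : HasFDerivAt sin2T _ p := hfst2.mul hrsqinv
  have hS2sq := (hasDerivAt_pow 2 (sin2T p)).comp_hasFDerivAt p hS2
  have hrt : HasFDerivAt (rt J) _ p := hr.add_const (Real.sqrt |J|)
  have hrt2 := (hasDerivAt_pow 2 (rt J p)).comp_hasFDerivAt p hrt
  have hcos2 := (hasDerivAt_pow 2 (cosT p)).comp_hasFDerivAt p hC
  have hSgd : HasFDerivAt (Sg J) _ p := hrt2.add (hcos2.const_mul |J|)
  have hSginv := (hasDerivAt_inv hSg.ne').comp_hasFDerivAt p hSgd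
  have hT2 := ((hC.const_mul (2*J^2)).mul hS2sq).mul hSginv
  have hY : HasFDerivAt (Y0 J) _ p := hT1.sub hT2
  have hfd := hY.fderiv
  rw [pdR, hfd]
  have hsqrr : Real.sqrt (p.1 ^ 2 + p.2 ^ 2) = rr p := rfl
  simp only [ContinuousLinearMap.sub_apply, ContinuousLinearMap.add_apply,
    ContinuousLinearMap.smul_apply, ContinuousLinearMap.coe_fst', ContinuousLinearMap.coe_snd',
    Function.comp_apply, Pi.add_apply, Pi.mul_apply, smul_eq_mul, hsqrr]
  simp only [cosT, sin2T]
  norm_num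
  field_simp
  ring_nf
  linear_combination (4* |J| *J*p.1^4*p.2 + 6*(rr p)^4*(Sg J p)^2*p.2) * hrr

lemma kerr_pdZ_val (J : ℝ) (hJ : J ≠ 0) (p : ℝ × ℝ) (hp : 0 < p.1) :
    pdZ (Y0 J) p = (-6*J*p.1^4*(rr p)^4*(Sg J p)^2
      - 2*J^2*p.1^4*(5*p.1^2-4*(rr p)^2)*(rr p)^2*(Sg J p)
      + 4*J^2*((rr p)^2-p.1^2)*p.1^4*(rt J p)*(rr p)^3
      + 4*J^2* |J| *((rr p)^2-p.1^2)*p.1^6) / ((rr p)^9*(Sg J p)^2) := by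
  have hq : (0:ℝ) < p.1 ^ 2 + p.2 ^ 2 := by positivity
  have hr0 : 0 < rr p := Real.sqrt_pos.2 hq
  have hrr : rr p ^ 2 = p.1 ^ 2 + p.2 ^ 2 := Real.sq_sqrt hq.le
  have haJ : (0:ℝ) < Real.sqrt |J| := Real.sqrt_pos.2 (abs_pos.2 hJ)
  have hRt : 0 < rt J p := by unfold rt; positivity
  have hSg : 0 < Sg J p := by unfold Sg; positivity
  have hfst2 : HasFDerivAt (fun w : ℝ × ℝ => w.1 ^ 2) ((2 * p.1 ^ 1) • ContinuousLinearMap.fst ℝ ℝ ℝ) p :=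
    (hasDerivAt_pow 2 p.1).comp_hasFDerivAt p hasFDerivAt_fst
  have hsnd2 : HasFDerivAt (fun w : ℝ × ℝ => w.2 ^ 2) ((2 * p.2 ^ 1) • ContinuousLinearMap.snd ℝ ℝ ℝ) p :=
    (hasDerivAt_pow 2 p.2).comp_hasFDerivAt p hasFDerivAt_snd
  have hr : HasFDerivAt rr _ p := (hfst2.add hsnd2).sqrt hq.ne'
  have hrinv := (hasDerivAt_inv hr0.ne').comp_hasFDerivAt p hr
  have hC : HasFDerivAt cosT _ p := hasFDerivAt_snd.mul hrinv
  have hC3 := (hasDerivAt_pow 3 (cosT p)).comp_hasFDerivAt p hC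
  have hT1 := (hC3.sub (hC.const_mul 3)).const_mul (2*J)
  have hrsq := (hasDerivAt_pow 2 (rr p)).comp_hasFDerivAt p hr
  have hrsqinv := (hasDerivAt_inv (pow_ne_zero 2 hr0.ne')).comp_hasFDerivAt p hrsq
  have hS2 : HasFDerivAt sin2T _ p := hfst2.mul hrsqinv
  have hS2sq := (hasDerivAt_pow 2 (sin2T p)).comp_hasFDerivAt p hS2
  have hrt : HasFDerivAt (rt J) _ p := hr.add_const (Real.sqrt |J|)
  have hrt2 := (hasDerivAt_pow 2 (rt J p)).comp_hasFDerivAt p hrt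
  have hcos2 := (hasDerivAt_pow 2 (cosT p)).comp_hasFDerivAt p hC
  have hSgd : HasFDerivAt (Sg J) _ p := hrt2.add (hcos2.const_mul |J|)
  have hSginv := (hasDerivAt_inv hSg.ne').comp_hasFDerivAt p hSgd
  have hT2 := ((hC.const_mul (2*J^2)).mul hS2sq).mul hSginv
  have hY : HasFDerivAt (Y0 J) _ p := hT1.sub hT2
  have hfd := hY.fderiv
  rw [pdZ, hfd]
  have hsqrr : Real.sqrt (p.1 ^ 2 + p.2 ^ 2) = rr p := rfl
  simp only [ContinuousLinearMap.sub_apply, ContinuousLinearMap.add_apply,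
    ContinuousLinearMap.smul_apply, ContinuousLinearMap.coe_fst', ContinuousLinearMap.coe_snd',
    Function.comp_apply, Pi.add_apply, Pi.mul_apply, smul_eq_mul, hsqrr]
  simp only [cosT, sin2T]
  norm_num
  field_simp
  ring_nf
  linear_combination (4* |J| *J*p.1^4*p.2^2 - 4* |J| *J*p.1^6 - 10*(rr p)^2*(Sg J p)*J*p.1^4
    - 4*(rr p)^3*(rt J p)*J*p.1^4 + 6*(rr p)^4*(Sg J p)^2*p.2^2 - 6*(rr p)^4*(Sg J p)^2*p.1^2
    - 6*(rr p)^6*(Sg J p)^2) * hrr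

lemma kerr_sq (Q X r : ℝ) (hr : 0 < r) (hQ : 0 ≤ Q) (hlb : 3*Q/(2*r^2) ≤ X) :
    9*Q^2 ≤ 4*r^4*X^2 := by
  have h0 : (0:ℝ) ≤ 3*Q/(2*r^2) := by positivity
  have h1 : (3*Q/(2*r^2))^2 ≤ X^2 := pow_le_pow_left₀ h0 hlb 2
  have h2 : (3*Q/(2*r^2))^2 = 9*Q^2/(4*r^4) := by
    rw [div_pow, div_eq_div_iff (by positivity) (by positivity)]; ring
  rw [h2, div_le_iff₀ (by positivity : (0:ℝ) < 4*r^4)] at h1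
  nlinarith [h1]

lemma kerr_fin (Q X r : ℝ) (hr : 0 < r) (hQ : 0 ≤ Q) (h : 9*Q^2 ≤ 4*r^4*X^2) :
    576*Q^2/r^6 + 576*Q^2/r^6 ≤ 1000 * X^2 * (r^2)⁻¹ := by
  rw [← add_div, show (1000:ℝ)*X^2*(r^2)⁻¹ = 1000*X^2/r^2 from by rw [div_eq_mul_inv],
    div_le_div_iff₀ (by positivity) (by positivity)]
  nlinarith [mul_le_mul_of_nonneg_right h (sq_nonneg r), mul_nonneg (sq_nonneg X) (pow_nonneg hr.le 6)]

set_option maxHeartbeats 1000000 in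
lemma kerr_ineq (J ρ z r a A R S : ℝ) (hρ : 0 < ρ) (hr : 0 < r)
    (hr2 : r^2 = ρ^2 + z^2) (ha : 0 < a) (ha2 : a^2 = A) (hJab : |J| = A)
    (hR : R = r + a) (hS : S = R^2 + A*(z/r)^2) :
    ((6*J*ρ^3*z*r^4*S^2 - 2*J^2*ρ^3*z*(4*r^2-5*ρ^2)*r^2*S + 4*J^2*z*ρ^5*R*r^3
        - 4*J^2* A *z*ρ^5*(r^2-ρ^2)) / (r^9*S^2))^2
      + ((-6*J*ρ^4*r^4*S^2 - 2*J^2*ρ^4*(5*ρ^2-4*r^2)*r^2*S + 4*J^2*(r^2-ρ^2)*ρ^4*R*r^3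
        + 4*J^2* A *(r^2-ρ^2)*ρ^6) / (r^9*S^2))^2
    ≤ 1000 * (((R^2 + A)^2 - r^2 * A * (ρ^2/r^2)) * (ρ^2/r^2) / S)^2 * (r^2)⁻¹ := by
  have hA : 0 < A := ha2 ▸ pow_pos ha 2
  have hJ2 : J^2 = A^2 := by rw [← hJab, sq_abs]
  have hz2 : z^2 ≤ r^2 := by nlinarith [sq_nonneg ρ]
  have hρ2 : ρ^2 ≤ r^2 := by nlinarith [sq_nonneg z]
  have hρr : ρ ≤ r := by nlinarith
  have hzr : |z| ≤ r := abs_le.2 ⟨by nlinarith [sq_nonneg (z+r)], by nlinarith [sq_nonneg (z-r)]⟩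
  have hRpos : 0 < R := by rw [hR]; linarith
  have hRr : r ≤ R := by rw [hR]; linarith
  have hRa : a ≤ R := by rw [hR]; linarith
  have hSR : R^2 ≤ S := by rw [hS]; have : 0 ≤ A*(z/r)^2 := by positivity
                           linarith
  have hSpos : 0 < S := lt_of_lt_of_le (pow_pos hRpos 2) hSR
  have hSa : A ≤ S := le_trans (by nlinarith : A ≤ R^2) hSR
  have hSRr : R*r ≤ S := le_trans (by nlinarith : R*r ≤ R^2) hSR
  have hSub : S ≤ R^2 + A := by
    rw [hS]
    have h1 : (z/r)^2 ≤ 1 := by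
      rw [div_pow]
      exact div_le_one_of_le₀ hz2 (by positivity)
    nlinarith
  -- lower bound on X
  obtain ⟨X, hXdef⟩ : ∃ x : ℝ, x = ((R^2 + A)^2 - r^2 * A * (ρ^2/r^2)) * (ρ^2/r^2) / S := ⟨_, rfl⟩
  rw [show (((R^2 + A)^2 - r^2 * A * (ρ^2/r^2)) * (ρ^2/r^2) / S) = X from hXdef.symm]
  have hXeq : X = ((R^2+A)^2 - A*ρ^2)*ρ^2/(r^2*S) := by
    rw [hXdef]; field_simp
  have hAR2 : A ≤ R^2 := by nlinarith
  have hXlb : 3*(A*ρ^2)/(2*r^2) ≤ X := by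
    rw [hXeq, div_le_div_iff₀ (by positivity) (by positivity)]
    have hr2R : r^2 ≤ R^2 := by nlinarith
    have h1 : A*ρ^2 ≤ (R^2+A)^2/4 := by
      nlinarith [mul_le_mul_of_nonneg_left hρ2 hA.le, mul_le_mul_of_nonneg_left hr2R hA.le,
        sq_nonneg (R^2 - A)]
    have h2 : (2*A)*S ≤ (R^2+A)*(R^2+A) := mul_le_mul (by linarith) hSub hSpos.le (by linarith)
    have c1 : (0:ℝ) ≤ ρ^2*r^2 := by positivity
    nlinarith [mul_le_mul_of_nonneg_right h2 c1, mul_le_mul_of_nonneg_right h1 c1]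
  have hX0 : 0 ≤ X := le_trans (by positivity) hXlb
  -- numerator bounds
  have habs4 : |4*r^2 - 5*ρ^2| ≤ 5*r^2 := abs_le.2 ⟨by nlinarith, by nlinarith⟩
  have habs4' : |5*ρ^2 - 4*r^2| ≤ 5*r^2 := abs_le.2 ⟨by nlinarith, by nlinarith⟩
  have hρzr : ρ* |z| ≤ r*r := mul_le_mul hρr hzr (abs_nonneg z) hr.le
  have hb1 : |6*J*ρ^3*z*r^4*S^2| ≤ 6*A*ρ^2*r^6*S^2 := by
    have h : |6*J*ρ^3*z*r^4*S^2| = 6*A*ρ^3* |z| *r^4*S^2 := by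
      rw [abs_mul, abs_mul, abs_mul, abs_mul, abs_mul, hJab,
        abs_of_nonneg (by positivity : (0:ℝ) ≤ ρ^3),
        abs_of_nonneg (by positivity : (0:ℝ) ≤ r^4),
        abs_of_nonneg (by positivity : (0:ℝ) ≤ S^2)]
      norm_num
    rw [h]
    calc 6*A*ρ^3* |z| *r^4*S^2 = (6*A*ρ^2*r^4*S^2)*(ρ* |z|) := by ring
      _ ≤ (6*A*ρ^2*r^4*S^2)*(r*r) := mul_le_mul_of_nonneg_left hρzr (by positivity)
      _ = 6*A*ρ^2*r^6*S^2 := by ring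
  have hb2 : |2*J^2*ρ^3*z*(4*r^2-5*ρ^2)*r^2*S| ≤ 10*A*ρ^2*r^6*S^2 := by
    have h : |2*J^2*ρ^3*z*(4*r^2-5*ρ^2)*r^2*S| = 2*A^2*ρ^3* |z| * |4*r^2-5*ρ^2| *r^2*S := by
      rw [abs_mul, abs_mul, abs_mul, abs_mul, abs_mul, abs_mul,
        abs_of_nonneg (by positivity : (0:ℝ) ≤ J^2), hJ2,
        abs_of_nonneg (by positivity : (0:ℝ) ≤ ρ^3),
        abs_of_nonneg (by positivity : (0:ℝ) ≤ r^2),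
        abs_of_nonneg hSpos.le]
      norm_num
    rw [h]
    have m1 : A*(ρ* |z|) ≤ S*(r*r) := mul_le_mul hSa hρzr (by positivity) hSpos.le
    have m2 : (A*(ρ* |z|))* |4*r^2-5*ρ^2| ≤ (S*(r*r))*(5*r^2) :=
      mul_le_mul m1 habs4 (abs_nonneg _) (by positivity)
    calc 2*A^2*ρ^3* |z| * |4*r^2-5*ρ^2| *r^2*S
        = (2*A*ρ^2*r^2*S)*((A*(ρ* |z|))* |4*r^2-5*ρ^2|) := by ring
      _ ≤ (2*A*ρ^2*r^2*S)*((S*(r*r))*(5*r^2)) := mul_le_mul_of_nonneg_left m2 (by positivity)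
      _ = 10*A*ρ^2*r^6*S^2 := by ring
  have hb3 : |4*J^2*z*ρ^5*R*r^3| ≤ 4*A*ρ^2*r^6*S^2 := by
    have h : |4*J^2*z*ρ^5*R*r^3| = 4*A^2* |z| *ρ^5*R*r^3 := by
      rw [abs_mul, abs_mul, abs_mul, abs_mul, abs_mul,
        abs_of_nonneg (by positivity : (0:ℝ) ≤ J^2), hJ2,
        abs_of_nonneg (by positivity : (0:ℝ) ≤ ρ^5),
        abs_of_nonneg hRpos.le,
        abs_of_nonneg (by positivity : (0:ℝ) ≤ r^3)]
      norm_num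
    rw [h]
    have m1 : R* |z| ≤ S := le_trans (by nlinarith [abs_nonneg z] : R* |z| ≤ R*r) hSRr
    have m2 : A*ρ^3 ≤ S*r^3 :=
      mul_le_mul hSa (pow_le_pow_left₀ hρ.le hρr 3) (by positivity) hSpos.le
    have m3 : (A*ρ^3)*(R* |z|) ≤ (S*r^3)*S := mul_le_mul m2 m1 (by positivity) (by positivity)
    calc 4*A^2* |z| *ρ^5*R*r^3 = (4*A*ρ^2*r^3)*((A*ρ^3)*(R* |z|)) := by ring
      _ ≤ (4*A*ρ^2*r^3)*((S*r^3)*S) := mul_le_mul_of_nonneg_left m3 (by positivity)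
      _ = 4*A*ρ^2*r^6*S^2 := by ring
  have hb4 : |4*J^2* A *z*ρ^5*(r^2-ρ^2)| ≤ 4*A*ρ^2*r^6*S^2 := by
    have h : |4*J^2* A *z*ρ^5*(r^2-ρ^2)| = 4*A^2*A* |z| *ρ^5*(r^2-ρ^2) := by
      rw [abs_mul, abs_mul, abs_mul, abs_mul, abs_mul,
        abs_of_nonneg (by positivity : (0:ℝ) ≤ J^2), hJ2,
        abs_of_nonneg hA.le,
        abs_of_nonneg (by positivity : (0:ℝ) ≤ ρ^5),
        abs_of_nonneg (by linarith : (0:ℝ) ≤ r^2-ρ^2)]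
      norm_num
    rw [h]
    have m1 : A^2*ρ^3 ≤ S^2*r^3 :=
      mul_le_mul (pow_le_pow_left₀ hA.le hSa 2) (pow_le_pow_left₀ hρ.le hρr 3) (by positivity) (by positivity)
    have m2 : |z| *(r^2-ρ^2) ≤ r*r^2 :=
      mul_le_mul hzr (by linarith) (by linarith) hr.le
    have m3 : (A^2*ρ^3)*( |z| *(r^2-ρ^2)) ≤ (S^2*r^3)*(r*r^2) :=
      mul_le_mul m1 m2 (mul_nonneg (abs_nonneg z) (by linarith)) (by positivity)
    calc 4*A^2*A* |z| *ρ^5*(r^2-ρ^2) = (4*A*ρ^2)*((A^2*ρ^3)*( |z| *(r^2-ρ^2))) := by ring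
      _ ≤ (4*A*ρ^2)*((S^2*r^3)*(r*r^2)) := mul_le_mul_of_nonneg_left m3 (by positivity)
      _ = 4*A*ρ^2*r^6*S^2 := by ring
  have hPρ : |6*J*ρ^3*z*r^4*S^2 - 2*J^2*ρ^3*z*(4*r^2-5*ρ^2)*r^2*S + 4*J^2*z*ρ^5*R*r^3
      - 4*J^2* A *z*ρ^5*(r^2-ρ^2)| ≤ 24*A*ρ^2*r^6*S^2 := by
    calc |6*J*ρ^3*z*r^4*S^2 - 2*J^2*ρ^3*z*(4*r^2-5*ρ^2)*r^2*S + 4*J^2*z*ρ^5*R*r^3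
        - 4*J^2* A *z*ρ^5*(r^2-ρ^2)|
        ≤ |6*J*ρ^3*z*r^4*S^2 - 2*J^2*ρ^3*z*(4*r^2-5*ρ^2)*r^2*S + 4*J^2*z*ρ^5*R*r^3|
          + |4*J^2* A *z*ρ^5*(r^2-ρ^2)| := abs_sub _ _
      _ ≤ (|6*J*ρ^3*z*r^4*S^2 - 2*J^2*ρ^3*z*(4*r^2-5*ρ^2)*r^2*S| + |4*J^2*z*ρ^5*R*r^3|)
          + |4*J^2* A *z*ρ^5*(r^2-ρ^2)| := by gcongr; exact abs_add_le _ _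
      _ ≤ ((|6*J*ρ^3*z*r^4*S^2| + |2*J^2*ρ^3*z*(4*r^2-5*ρ^2)*r^2*S|) + |4*J^2*z*ρ^5*R*r^3|)
          + |4*J^2* A *z*ρ^5*(r^2-ρ^2)| := by gcongr ?_ + _ + _; exact abs_sub _ _
      _ ≤ ((6*A*ρ^2*r^6*S^2 + 10*A*ρ^2*r^6*S^2) + 4*A*ρ^2*r^6*S^2) + 4*A*ρ^2*r^6*S^2 := by
          gcongr
      _ = 24*A*ρ^2*r^6*S^2 := by ring
  -- z-direction bounds
  have hb1z : |-6*J*ρ^4*r^4*S^2| ≤ 6*A*ρ^2*r^6*S^2 := by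
    have h : |-6*J*ρ^4*r^4*S^2| = 6*A*ρ^4*r^4*S^2 := by
      rw [abs_mul, abs_mul, abs_mul, abs_mul, hJab,
        abs_of_nonneg (by positivity : (0:ℝ) ≤ ρ^4),
        abs_of_nonneg (by positivity : (0:ℝ) ≤ r^4),
        abs_of_nonneg (by positivity : (0:ℝ) ≤ S^2)]
      norm_num
    rw [h]
    calc 6*A*ρ^4*r^4*S^2 = (6*A*ρ^2*r^4*S^2)*(ρ^2) := by ring
      _ ≤ (6*A*ρ^2*r^4*S^2)*(r^2) := mul_le_mul_of_nonneg_left hρ2 (by positivity)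
      _ = 6*A*ρ^2*r^6*S^2 := by ring
  have hb2z : |2*J^2*ρ^4*(5*ρ^2-4*r^2)*r^2*S| ≤ 10*A*ρ^2*r^6*S^2 := by
    have h : |2*J^2*ρ^4*(5*ρ^2-4*r^2)*r^2*S| = 2*A^2*ρ^4* |5*ρ^2-4*r^2| *r^2*S := by
      rw [abs_mul, abs_mul, abs_mul, abs_mul, abs_mul,
        abs_of_nonneg (by positivity : (0:ℝ) ≤ J^2), hJ2,
        abs_of_nonneg (by positivity : (0:ℝ) ≤ ρ^4),
        abs_of_nonneg (by positivity : (0:ℝ) ≤ r^2),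
        abs_of_nonneg hSpos.le]
      norm_num
    rw [h]
    have m1 : (A*ρ^2)* |5*ρ^2-4*r^2| ≤ (S*r^2)*(5*r^2) :=
      mul_le_mul (mul_le_mul hSa hρ2 (by positivity) hSpos.le) habs4' (abs_nonneg _) (by positivity)
    calc 2*A^2*ρ^4* |5*ρ^2-4*r^2| *r^2*S = (2*A*ρ^2*r^2*S)*((A*ρ^2)* |5*ρ^2-4*r^2|) := by ring
      _ ≤ (2*A*ρ^2*r^2*S)*((S*r^2)*(5*r^2)) := mul_le_mul_of_nonneg_left m1 (by positivity)
      _ = 10*A*ρ^2*r^6*S^2 := by ring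
  have hb3z : |4*J^2*(r^2-ρ^2)*ρ^4*R*r^3| ≤ 4*A*ρ^2*r^6*S^2 := by
    have h : |4*J^2*(r^2-ρ^2)*ρ^4*R*r^3| = 4*A^2*(r^2-ρ^2)*ρ^4*R*r^3 := by
      rw [abs_mul, abs_mul, abs_mul, abs_mul, abs_mul,
        abs_of_nonneg (by positivity : (0:ℝ) ≤ J^2), hJ2,
        abs_of_nonneg (by linarith : (0:ℝ) ≤ r^2-ρ^2),
        abs_of_nonneg (by positivity : (0:ℝ) ≤ ρ^4),
        abs_of_nonneg hRpos.le,
        abs_of_nonneg (by positivity : (0:ℝ) ≤ r^3)]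
      norm_num
    rw [h]
    have m1 : A*(r^2-ρ^2) ≤ S*r^2 := mul_le_mul hSa (by linarith) (by linarith) hSpos.le
    have m2 : ρ^2*(R*r) ≤ r^2*S := mul_le_mul hρ2 hSRr (by positivity) (by positivity)
    have m3 : (A*(r^2-ρ^2))*(ρ^2*(R*r)) ≤ (S*r^2)*(r^2*S) :=
      mul_le_mul m1 m2 (by positivity) (by positivity)
    calc 4*A^2*(r^2-ρ^2)*ρ^4*R*r^3 = (4*A*ρ^2*r^2)*((A*(r^2-ρ^2))*(ρ^2*(R*r))) := by ring
      _ ≤ (4*A*ρ^2*r^2)*((S*r^2)*(r^2*S)) := mul_le_mul_of_nonneg_left m3 (by positivity)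
      _ = 4*A*ρ^2*r^6*S^2 := by ring
  have hb4z : |4*J^2* A *(r^2-ρ^2)*ρ^6| ≤ 4*A*ρ^2*r^6*S^2 := by
    have h : |4*J^2* A *(r^2-ρ^2)*ρ^6| = 4*A^2*A*(r^2-ρ^2)*ρ^6 := by
      rw [abs_mul, abs_mul, abs_mul, abs_mul,
        abs_of_nonneg (by positivity : (0:ℝ) ≤ J^2), hJ2,
        abs_of_nonneg hA.le,
        abs_of_nonneg (by linarith : (0:ℝ) ≤ r^2-ρ^2),
        abs_of_nonneg (by positivity : (0:ℝ) ≤ ρ^6)]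
      norm_num
    rw [h]
    have m3 : (A^2)*((r^2-ρ^2)*ρ^4) ≤ (S^2)*(r^2*r^4) := by
      have n2 : (r^2-ρ^2)*ρ^4 ≤ r^2*r^4 :=
        mul_le_mul (by linarith) (pow_le_pow_left₀ hρ.le hρr 4) (by positivity) (by positivity)
      exact mul_le_mul (pow_le_pow_left₀ hA.le hSa 2) n2 (mul_nonneg (by linarith) (by positivity)) (by positivity)
    calc 4*A^2*A*(r^2-ρ^2)*ρ^6 = (4*A*ρ^2)*((A^2)*((r^2-ρ^2)*ρ^4)) := by ring
      _ ≤ (4*A*ρ^2)*((S^2)*(r^2*r^4)) := mul_le_mul_of_nonneg_left m3 (by positivity)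
      _ = 4*A*ρ^2*r^6*S^2 := by ring
  have hPz : |-6*J*ρ^4*r^4*S^2 - 2*J^2*ρ^4*(5*ρ^2-4*r^2)*r^2*S + 4*J^2*(r^2-ρ^2)*ρ^4*R*r^3
      + 4*J^2* A *(r^2-ρ^2)*ρ^6| ≤ 24*A*ρ^2*r^6*S^2 := by
    calc |-6*J*ρ^4*r^4*S^2 - 2*J^2*ρ^4*(5*ρ^2-4*r^2)*r^2*S + 4*J^2*(r^2-ρ^2)*ρ^4*R*r^3
        + 4*J^2* A *(r^2-ρ^2)*ρ^6|
        ≤ |-6*J*ρ^4*r^4*S^2 - 2*J^2*ρ^4*(5*ρ^2-4*r^2)*r^2*S + 4*J^2*(r^2-ρ^2)*ρ^4*R*r^3|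
          + |4*J^2* A *(r^2-ρ^2)*ρ^6| := abs_add_le _ _
      _ ≤ (|-6*J*ρ^4*r^4*S^2 - 2*J^2*ρ^4*(5*ρ^2-4*r^2)*r^2*S| + |4*J^2*(r^2-ρ^2)*ρ^4*R*r^3|)
          + |4*J^2* A *(r^2-ρ^2)*ρ^6| := by gcongr; exact abs_add_le _ _
      _ ≤ ((|-6*J*ρ^4*r^4*S^2| + |2*J^2*ρ^4*(5*ρ^2-4*r^2)*r^2*S|) + |4*J^2*(r^2-ρ^2)*ρ^4*R*r^3|)
          + |4*J^2* A *(r^2-ρ^2)*ρ^6| := by gcongr ?_ + _ + _; exact abs_sub _ _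
      _ ≤ ((6*A*ρ^2*r^6*S^2 + 10*A*ρ^2*r^6*S^2) + 4*A*ρ^2*r^6*S^2) + 4*A*ρ^2*r^6*S^2 := by
          gcongr
      _ = 24*A*ρ^2*r^6*S^2 := by ring
  -- assemble
  have hDpos : (0:ℝ) < r^9*S^2 := by positivity
  have key : ∀ P : ℝ, |P| ≤ 24*A*ρ^2*r^6*S^2 → (P/(r^9*S^2))^2 ≤ 576*(A*ρ^2)^2/r^6 := by
    intro P hP
    have h1 : P^2 ≤ (24*A*ρ^2*r^6*S^2)^2 := by
      calc P^2 = |P|^2 := (sq_abs _).symm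
        _ ≤ (24*A*ρ^2*r^6*S^2)^2 := pow_le_pow_left₀ (abs_nonneg _) hP 2
    have h2 : (P/(r^9*S^2))^2 = P^2/(r^9*S^2)^2 := by rw [div_pow]
    have h3 : (24*A*ρ^2*r^6*S^2)^2/(r^9*S^2)^2 = 576*(A*ρ^2)^2/r^6 := by
      rw [div_eq_div_iff (by positivity) (by positivity)]; ring
    rw [h2, ← h3]
    exact (div_le_div_iff_of_pos_right (by positivity)).2 h1
  have s1 := key _ hPρ
  have s2 := key _ hPz
  have hfin : 576*(A*ρ^2)^2/r^6 + 576*(A*ρ^2)^2/r^6 ≤ 1000 * X^2 * (r^2)⁻¹ :=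
    kerr_fin (A*ρ^2) X r hr (by positivity)
      (kerr_sq (A*ρ^2) X r hr (by positivity) hXlb)
  calc ((6*J*ρ^3*z*r^4*S^2 - 2*J^2*ρ^3*z*(4*r^2-5*ρ^2)*r^2*S + 4*J^2*z*ρ^5*R*r^3
        - 4*J^2* A *z*ρ^5*(r^2-ρ^2)) / (r^9*S^2))^2
      + ((-6*J*ρ^4*r^4*S^2 - 2*J^2*ρ^4*(5*ρ^2-4*r^2)*r^2*S + 4*J^2*(r^2-ρ^2)*ρ^4*R*r^3
        + 4*J^2* A *(r^2-ρ^2)*ρ^6) / (r^9*S^2))^2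
      ≤ 576*(A*ρ^2)^2/r^6 + 576*(A*ρ^2)^2/r^6 := by
        exact add_le_add s1 s2
    _ ≤ 1000 * X^2 * (r^2)⁻¹ := hfin

/-- There exists C₁ > 0, depending only on J, such that for all (ρ, z)
with ρ > 0 the extreme Kerr data satisfy |∂Y₀|² ≤ C₁ X₀² r⁻². -/
theorem extremeKerr_Y0_gradient_bound (J : ℝ) (hJ : J ≠ 0) :
    ∃ C₁ > (0 : ℝ), ∀ p : ℝ × ℝ, 0 < p.1 →
      gradSq (Y0 J) p ≤ C₁ * (X0 J p) ^ 2 * ((rr p) ^ 2)⁻¹ := by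
  refine ⟨1000, by norm_num, ?_⟩
  intro p hp
  have hq : (0:ℝ) < p.1 ^ 2 + p.2 ^ 2 := by positivity
  have hr0 : 0 < rr p := Real.sqrt_pos.2 hq
  have hrr : rr p ^ 2 = p.1 ^ 2 + p.2 ^ 2 := Real.sq_sqrt hq.le
  have haJ : (0:ℝ) < Real.sqrt |J| := Real.sqrt_pos.2 (abs_pos.2 hJ)
  have ha2 : (Real.sqrt |J|)^2 = |J| := Real.sq_sqrt (abs_nonneg J)
  have e1 := kerr_pdR_val J hJ p hp
  have e2 := kerr_pdZ_val J hJ p hp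
  have hgs : gradSq (Y0 J) p = pdR (Y0 J) p ^ 2 + pdZ (Y0 J) p ^ 2 := rfl
  rw [hgs, e1, e2]
  have hX : X0 J p = (((rt J p)^2 + |J|)^2 - (rr p)^2 * |J| * (p.1^2/(rr p)^2))
      * (p.1^2/(rr p)^2) / Sg J p := by
    simp only [X0, sin2T]
  rw [hX]
  exact kerr_ineq J p.1 p.2 (rr p) (Real.sqrt |J|) |J| (rt J p) (Sg J p) hp hr0 hrr haJ ha2
    rfl rfl (by simp only [Sg, cosT])
end
end

section
/- The extreme Kerr norm of the Killing vector satisfies the lower bound ρ² ≤ X₀ at every point of ℝ³ with r > 0. -/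
open Real MeasureTheory

noncomputable section

/-- The extreme Kerr norm of the Killing vector satisfies the lower
bound ρ² ≤ X₀ at every point of ℝ³ with r > 0. -/
theorem extremeKerr_X0_lower_bound (J : ℝ) (hJ : J ≠ 0) :
    ∀ p : ℝ × ℝ, 0 ≤ p.1 → 0 < rr p → p.1 ^ 2 ≤ X0 J p := by
  intro p hρ hr
  have hr2 : rr p ^ 2 = p.1 ^ 2 + p.2 ^ 2 := Real.sq_sqrt (by positivity)
  have hq2 : Real.sqrt |J| ^ 2 = |J| := Real.sq_sqrt (abs_nonneg J)
  have hqnn : 0 ≤ Real.sqrt |J| := Real.sqrt_nonneg _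
  set r := rr p with hrdef
  set q := Real.sqrt |J| with hqdef
  have hR : rt J p = r + q := rfl
  have hRpos : 0 < rt J p := by rw [hR]; linarith
  have hSg : 0 < Sg J p := by
    have h1 : 0 < rt J p ^ 2 := pow_pos hRpos 2
    have h2 : 0 ≤ |J| * cosT p ^ 2 := mul_nonneg (abs_nonneg J) (sq_nonneg _)
    unfold Sg; linarith
  have hs0 : 0 ≤ sin2T p := by
    unfold sin2T; positivity
  have hs : sin2T p * r ^ 2 = p.1 ^ 2 := by
    unfold sin2T; rw [← hrdef]; field_simp
  have hc : cosT p ^ 2 * r ^ 2 = p.2 ^ 2 := by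
    unfold cosT; rw [← hrdef]; field_simp
  have hsc : sin2T p + cosT p ^ 2 = 1 := by
    have h : (sin2T p + cosT p ^ 2) * r ^ 2 = 1 * r ^ 2 := by
      rw [add_mul, hs, hc, one_mul, hr2]
    exact mul_right_cancel₀ (by positivity) h
  have hA : 0 ≤ (r + q) ^ 2 + |J| := by positivity
  have hAr : 0 ≤ ((r + q) ^ 2 + |J|) - r ^ 2 := by nlinarith
  have key : 0 ≤ sin2T p * (((r + q) ^ 2 + |J|) * (((r + q) ^ 2 + |J|) - r ^ 2)) :=
    mul_nonneg hs0 (mul_nonneg hA hAr)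
  have expand : (((r + q) ^ 2 + |J|) ^ 2 - r ^ 2 * |J| * sin2T p) * sin2T p
      - p.1 ^ 2 * ((r + q) ^ 2 + |J| * cosT p ^ 2)
      = sin2T p * (((r + q) ^ 2 + |J|) * (((r + q) ^ 2 + |J|) - r ^ 2)) := by
    rw [← hs, ← hq2]
    linear_combination (-(r ^ 2 * q ^ 2 * sin2T p)) * hsc
  rw [X0, le_div_iff₀ hSg]
  unfold Sg
  rw [hR, ← hrdef]
  linarith [key, expand]
end
end
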